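/- arXiv:1902.10142 — 6 statements merged into one kernel-verified Lean document; each statement's English description precedes it below -/
import Mathlib

section
/- If p ≠ q, then there exists an integer M ≥ 1 such that the stochastic rank statistic R computed with m = M resampled points is not uniformly distributed on {0,1,…,M}. -/
open MeasureTheory ProbabilityTheory
open scoped ENNReal

noncomputable section

/-- The uniform distribution on the interval `[0,1]`. -/
def unifIcc : Measure ℝ := volume.restrict (Set.Icc 0 1)

/-- The setup of the stochastic rank statistic: on a common probability space `(Ω, μ)`,
`X 0` has distribution `q`, the `X i` for `i ≠ 0` have distribution `p`, the `U i` are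
uniform on `[0,1]`, and all of `X 0, …, X m, U 0, …, U m` are mutually independent.
(Mutual independence of the `2(m+1)` variables is recorded by independence of the pairs
`(X i, U i)` together with each pair having the product law.) -/
def IsRankSetup {T : Type} [MeasurableSpace T] {Ω : Type} [MeasurableSpace Ω]
    (μ : Measure Ω) (p q : Measure T) (m : ℕ)
    (X : Fin (m + 1) → Ω → T) (U : Fin (m + 1) → Ω → ℝ) : Prop :=
  (∀ i, Measurable (X i)) ∧ (∀ i, Measurable (U i)) ∧
  iIndepFun (fun i ω => (X i ω, U i ω)) μ ∧
  μ.map (fun ω => (X 0 ω, U 0 ω)) = q.prod unifIcc ∧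
  ∀ i : Fin (m + 1), i ≠ 0 → μ.map (fun ω => (X i ω, U i ω)) = p.prod unifIcc

open scoped Classical in
/-- The stochastic rank statistic
`R = ∑_{j=1}^m (1[X j ≺ X 0] + 1[X j = X 0 ∧ U j < U 0])`. -/
def rankStat {T : Type} {Ω : Type} (r : T → T → Prop) (m : ℕ)
    (X : Fin (m + 1) → Ω → T) (U : Fin (m + 1) → Ω → ℝ) (ω : Ω) : ℕ :=
  ∑ j : Fin m, ((if r (X j.succ ω) (X 0 ω) then 1 else 0) +
    (if X j.succ ω = X 0 ω ∧ U j.succ ω < U 0 ω then 1 else 0))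

set_option linter.unusedSectionVars false

lemma integrable_of_icc_bound {μ : Measure ℝ} [IsProbabilityMeasure μ]
    (hμs : μ (Set.Icc 0 1)ᶜ = 0) {f : ℝ → ℝ} (hf : Continuous f) :
    Integrable f μ := by
  obtain ⟨C, hC⟩ := (isCompact_Icc (a := (0:ℝ)) (b := 1)).exists_bound_of_continuousOn
    hf.continuousOn
  have hae : ∀ᵐ x ∂μ, x ∈ Set.Icc (0:ℝ) 1 := by
    rw [ae_iff]
    exact hμs
  refine (integrable_const C).mono' hf.aestronglyMeasurable ?_
  filter_upwards [hae] with x hx using hC x hx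

lemma integral_poly_eq_of_moments {μ ν : Measure ℝ} [IsProbabilityMeasure μ]
    [IsProbabilityMeasure ν] (hμs : μ (Set.Icc 0 1)ᶜ = 0) (hνs : ν (Set.Icc 0 1)ᶜ = 0)
    (h : ∀ n : ℕ, ∫ x, x ^ n ∂μ = ∫ x, x ^ n ∂ν) (P : Polynomial ℝ) :
    ∫ x, P.eval x ∂μ = ∫ x, P.eval x ∂ν := by
  have key : ∀ (ρ : Measure ℝ) [IsProbabilityMeasure ρ], ρ (Set.Icc 0 1)ᶜ = 0 →
      ∫ x, P.eval x ∂ρ = ∑ i ∈ Finset.range (P.natDegree + 1), P.coeff i * ∫ x, x ^ i ∂ρ := by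
    intro ρ _ hρ
    have h1 : ∀ x : ℝ, P.eval x = ∑ i ∈ Finset.range (P.natDegree + 1), P.coeff i * x ^ i := by
      intro x; exact Polynomial.eval_eq_sum_range (p := P) x
    simp_rw [h1]
    rw [integral_finset_sum]
    · exact Finset.sum_congr rfl fun i _ => integral_const_mul _ _
    · intro i _
      exact (integrable_of_icc_bound hρ (continuous_pow i)).const_mul _
  rw [key μ hμs, key ν hνs]
  exact Finset.sum_congr rfl fun i _ => by rw [h i]

lemma measure_eq_of_moments (μ ν : Measure ℝ) [IsProbabilityMeasure μ] [IsProbabilityMeasure ν]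
    (hμs : μ (Set.Icc 0 1)ᶜ = 0) (hνs : ν (Set.Icc 0 1)ᶜ = 0)
    (h : ∀ n : ℕ, ∫ x, x ^ n ∂μ = ∫ x, x ^ n ∂ν) : μ = ν := by
  have hμa : ∀ᵐ x ∂μ, x ∈ Set.Icc (0:ℝ) 1 := by rw [ae_iff]; exact hμs
  have hνa : ∀ᵐ x ∂ν, x ∈ Set.Icc (0:ℝ) 1 := by rw [ae_iff]; exact hνs
  have main : ∀ f : ℝ → ℝ, Continuous f → (∃ C, ∀ x, |f x| ≤ C) →
      ∫ x, f x ∂μ = ∫ x, f x ∂ν := by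
    intro f hf ⟨C, hC⟩
    have hintμ : Integrable f μ := integrable_of_icc_bound hμs hf
    have hintν : Integrable f ν := integrable_of_icc_bound hνs hf
    have key : ∀ ε : ℝ, 0 < ε → |∫ x, f x ∂μ - ∫ x, f x ∂ν| ≤ 2 * ε := by
      intro ε hε
      obtain ⟨P, hP⟩ := exists_polynomial_near_of_continuousOn 0 1 f hf.continuousOn ε hε
      have hPμ : Integrable (fun x => P.eval x) μ := integrable_of_icc_bound hμs P.continuous
      have hPν : Integrable (fun x => P.eval x) ν := integrable_of_icc_bound hνs P.continuous
      have e1 : ‖∫ x, (f x - P.eval x) ∂μ‖ ≤ ε * (μ Set.univ).toReal := by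
        refine norm_integral_le_of_norm_le_const ?_
        filter_upwards [hμa] with x hx
        rw [Real.norm_eq_abs, abs_sub_comm]
        exact (hP x hx).le
      have e2 : ‖∫ x, (f x - P.eval x) ∂ν‖ ≤ ε * (ν Set.univ).toReal := by
        refine norm_integral_le_of_norm_le_const ?_
        filter_upwards [hνa] with x hx
        rw [Real.norm_eq_abs, abs_sub_comm]
        exact (hP x hx).le
      have hPeq := integral_poly_eq_of_moments hμs hνs h P
      have d1 : ∫ x, f x ∂μ - ∫ x, f x ∂ν =
          (∫ x, (f x - P.eval x) ∂μ) - (∫ x, (f x - P.eval x) ∂ν) := by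
        rw [integral_sub hintμ hPμ, integral_sub hintν hPν, hPeq]; ring
      rw [d1]
      simp only [measure_univ, ENNReal.toReal_one, mul_one] at e1 e2
      calc |(∫ x, (f x - P.eval x) ∂μ) - (∫ x, (f x - P.eval x) ∂ν)|
          ≤ |∫ x, (f x - P.eval x) ∂μ| + |∫ x, (f x - P.eval x) ∂ν| := abs_sub _ _
        _ ≤ ε + ε := add_le_add e1 e2
        _ = 2 * ε := by ring
    by_contra hne
    have hpos : 0 < |∫ x, f x ∂μ - ∫ x, f x ∂ν| := by
      rw [abs_pos]
      exact sub_ne_zero_of_ne hne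
    have := key (|∫ x, f x ∂μ - ∫ x, f x ∂ν| / 3) (by linarith)
    linarith
  apply ext_of_forall_lintegral_eq_of_IsFiniteMeasure
  intro f
  have hfi : ∀ (ρ : Measure ℝ) [IsProbabilityMeasure ρ], ρ (Set.Icc 0 1)ᶜ = 0 →
      Integrable (fun x => (f x : ℝ)) ρ := by
    intro ρ _ hρ
    exact integrable_of_icc_bound hρ (NNReal.continuous_coe.comp f.continuous)
  rw [lintegral_coe_eq_integral f (hfi μ hμs), lintegral_coe_eq_integral f (hfi ν hνs)]
  congr 1
  obtain ⟨C, hC⟩ := f.bounded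
  refine main _ (NNReal.continuous_coe.comp f.continuous) ⟨(f 0 : ℝ) + C, fun x => ?_⟩
  have h1 : dist (f x) (f 0) ≤ C := hC x 0
  rw [NNReal.dist_eq] at h1
  have h2 : |(f x : ℝ)| = (f x : ℝ) := abs_of_nonneg (f x).coe_nonneg
  have h3 : (f x : ℝ) - (f 0 : ℝ) ≤ |(f x : ℝ) - (f 0 : ℝ)| := le_abs_self _
  linarith

instance : IsProbabilityMeasure unifIcc :=
  ⟨by rw [unifIcc, Measure.restrict_apply_univ, Real.volume_Icc]; norm_num⟩

namespace SRS

variable {T : Type} [Countable T] [MeasurableSpace T] [MeasurableSingletonClass T]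

/-- The "beats" region: `z` counts against center `w`. -/
def D (r : T → T → Prop) (w : T × ℝ) : Set (T × ℝ) :=
  ({t | r t w.1} ×ˢ (Set.univ : Set ℝ)) ∪ ({w.1} ×ˢ Set.Iio w.2)

lemma mem_D {r : T → T → Prop} {w z : T × ℝ} :
    z ∈ D r w ↔ r z.1 w.1 ∨ (z.1 = w.1 ∧ z.2 < w.2) := by
  rw [D, Set.mem_union, Set.mem_prod, Set.mem_prod]
  simp

lemma measurableSet_D (r : T → T → Prop) (w : T × ℝ) : MeasurableSet (D r w) :=
  (((Set.to_countable _).measurableSet).prod MeasurableSet.univ).union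
    ((measurableSet_singleton _).prod measurableSet_Iio)

lemma measure_D (r : T → T → Prop) (hr : IsStrictTotalOrder T r) (p : Measure T) (w : T × ℝ) :
    (p.prod unifIcc) (D r w) = p {t | r t w.1} + p {w.1} * unifIcc (Set.Iio w.2) := by
  haveI := hr
  have hd : Disjoint ({t | r t w.1} ×ˢ (Set.univ : Set ℝ)) ({w.1} ×ˢ Set.Iio w.2) := by
    rw [Set.disjoint_left]
    rintro z ⟨hz1, -⟩ ⟨hz2, -⟩
    simp only [Set.mem_setOf_eq] at hz1
    simp only [Set.mem_singleton_iff] at hz2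
    exact absurd (hz2 ▸ hz1) (irrefl w.1)
  rw [D, measure_union hd ((measurableSet_singleton _).prod measurableSet_Iio),
    Measure.prod_prod, Measure.prod_prod, measure_univ, mul_one]

variable {Ω : Type} [MeasurableSpace Ω]

/-- The joint law of independent random pairs is the product measure. -/
lemma joint_law_pi {m : ℕ} (Y : Fin (m + 1) → Ω → T × ℝ) (hYm : ∀ i, Measurable (Y i))
    (μ : Measure Ω) [IsProbabilityMeasure μ]
    (hind : iIndepFun Y μ) :
    μ.map (fun ω i => Y i ω) = Measure.pi (fun i => μ.map (Y i)) := by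
  haveI : ∀ i, IsProbabilityMeasure (μ.map (Y i)) :=
    fun i => Measure.isProbabilityMeasure_map (hYm i).aemeasurable
  symm
  apply Measure.pi_eq
  intro s hs
  rw [Measure.map_apply (measurable_pi_lambda _ hYm) (MeasurableSet.univ_pi hs)]
  have h1 : (fun ω i => Y i ω) ⁻¹' Set.pi Set.univ s = ⋂ i ∈ Finset.univ, Y i ⁻¹' s i := by
    ext ω; simp [Set.mem_pi]
  rw [h1, hind.measure_inter_preimage_eq_mul Finset.univ (fun i _ => hs i)]
  exact Finset.prod_congr rfl fun i _ => (Measure.map_apply (hYm i) (hs i)).symm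

theorem rank_dist (r : T → T → Prop) (hr : IsStrictTotalOrder T r) (p q : Measure T)
    [IsProbabilityMeasure p] [IsProbabilityMeasure q] (m : ℕ)
    (μ : Measure Ω) [IsProbabilityMeasure μ]
    (X : Fin (m + 1) → Ω → T) (U : Fin (m + 1) → Ω → ℝ)
    (hs : IsRankSetup μ p q m X U) :
    μ {ω | rankStat r m X U ω = m} =
      ∫⁻ w, ((p.prod unifIcc) (D r w)) ^ m ∂(q.prod unifIcc) := by
  haveI := hr
  obtain ⟨hX, hU, hind, h0, hi⟩ := hs
  classical
  set Y : Fin (m + 1) → Ω → T × ℝ := fun i ω => (X i ω, U i ω) with hY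
  have hYm : ∀ i, Measurable (Y i) := fun i => (hX i).prodMk (hU i)
  haveI : ∀ i, IsProbabilityMeasure (μ.map (Y i)) :=
    fun i => Measure.isProbabilityMeasure_map (hYm i).aemeasurable
  -- Step 1: rewrite the event
  set S : Set (Fin (m + 1) → T × ℝ) := {y | ∀ j : Fin m, y j.succ ∈ D r (y 0)} with hS
  have hmemD : ∀ (ω : Ω) (j : Fin m),
      (Y j.succ ω ∈ D r (Y 0 ω)) ↔
        (r (X j.succ ω) (X 0 ω) ∨ (X j.succ ω = X 0 ω ∧ U j.succ ω < U 0 ω)) := by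
    intro ω j; rw [mem_D]
  have hevent : {ω | rankStat r m X U ω = m} = (fun ω i => Y i ω) ⁻¹' S := by
    ext ω
    simp only [Set.mem_setOf_eq, Set.mem_preimage, hS]
    have step : rankStat r m X U ω = ∑ j : Fin m,
        (if (r (X j.succ ω) (X 0 ω) ∨ (X j.succ ω = X 0 ω ∧ U j.succ ω < U 0 ω))
          then 1 else 0) := by
      unfold rankStat
      refine Finset.sum_congr rfl fun j _ => ?_
      by_cases h1 : r (X j.succ ω) (X 0 ω) <;>
        by_cases h2 : X j.succ ω = X 0 ω ∧ U j.succ ω < U 0 ω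
      · exact absurd (h2.1 ▸ h1) (irrefl (X 0 ω))
      · rw [if_pos h1, if_neg h2, if_pos (Or.inl h1)]
      · rw [if_neg h1, if_pos h2, if_pos (Or.inr h2)]
      · rw [if_neg h1, if_neg h2, if_neg (by tauto)]
    rw [step, Finset.sum_boole]
    push_cast
    constructor
    · intro h j
      have huniv : Finset.univ.filter
          (fun j : Fin m => (r (X j.succ ω) (X 0 ω) ∨
            (X j.succ ω = X 0 ω ∧ U j.succ ω < U 0 ω))) = Finset.univ := by
        apply Finset.eq_univ_of_card
        simpa using h
      have : j ∈ Finset.univ.filter (fun j : Fin m => (r (X j.succ ω) (X 0 ω) ∨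
            (X j.succ ω = X 0 ω ∧ U j.succ ω < U 0 ω))) := by
        rw [huniv]; exact Finset.mem_univ j
      rw [hmemD ω j]
      exact (Finset.mem_filter.mp this).2
    · intro h
      rw [Finset.filter_true_of_mem fun j _ => (hmemD ω j).mp (h j)]
      simp
  -- Step 2: measurability of S
  have hSm : MeasurableSet S := by
    have : S = ⋂ j : Fin m, (fun y : Fin (m + 1) → T × ℝ => (y j.succ, y 0)) ⁻¹'
        {zw : (T × ℝ) × (T × ℝ) | zw.1 ∈ D r zw.2} := by
      ext y; simp [hS]
    rw [this]
    refine MeasurableSet.iInter fun j => ?_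
    refine ((measurable_pi_apply _).prodMk (measurable_pi_apply _)) ?_
    have : {zw : (T × ℝ) × (T × ℝ) | zw.1 ∈ D r zw.2} =
        ((fun zw : (T × ℝ) × (T × ℝ) => (zw.1.1, zw.2.1)) ⁻¹' {tt : T × T | r tt.1 tt.2}) ∪
        (((fun zw : (T × ℝ) × (T × ℝ) => (zw.1.1, zw.2.1)) ⁻¹' {tt : T × T | tt.1 = tt.2}) ∩
          {zw : (T × ℝ) × (T × ℝ) | zw.1.2 < zw.2.2}) := by
      ext zw; simp [mem_D]
    rw [this]
    have hg : Measurable (fun zw : (T × ℝ) × (T × ℝ) => (zw.1.1, zw.2.1)) :=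
      (measurable_fst.fst).prodMk (measurable_snd.fst)
    exact ((hg ((Set.to_countable _).measurableSet)).union
      ((hg ((Set.to_countable _).measurableSet)).inter
        (measurableSet_lt measurable_fst.snd measurable_snd.snd)))
  -- Step 3: joint law
  have hjoint := joint_law_pi Y hYm μ hind
  rw [hevent, ← Measure.map_apply (measurable_pi_lambda _ hYm) hSm, hjoint]
  -- Step 4: split off coordinate 0
  set L : Fin (m + 1) → Measure (T × ℝ) := fun i => μ.map (Y i) with hL
  set e := MeasurableEquiv.piFinSuccAbove (fun _ : Fin (m + 1) => T × ℝ) 0 with he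
  have hmp := measurePreserving_piFinSuccAbove L 0
  have hpre : MeasurableSet (e.symm ⁻¹' S) := e.symm.measurable hSm
  have hkey : Measure.pi L S = ((L 0).prod (Measure.pi fun j : Fin m =>
      L ((0 : Fin (m + 1)).succAbove j))) (e.symm ⁻¹' S) := by
    have hSe : S = ⇑e ⁻¹' (⇑e.symm ⁻¹' S) := by ext y; simp
    rw [hSe]
    exact hmp.measure_preimage hpre.nullMeasurableSet
  rw [hkey]
  -- Step 5: identify the non-zero coordinate laws
  have hLsucc : (fun j : Fin m => L ((0 : Fin (m + 1)).succAbove j)) =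
      fun _ : Fin m => p.prod unifIcc := by
    funext j
    rw [hL]
    simp only []
    rw [Fin.zero_succAbove]
    exact hi j.succ (Fin.succ_ne_zero j)
  have hL0 : L 0 = q.prod unifIcc := h0
  rw [hLsucc, hL0]
  -- Step 6: Fubini
  haveI : SigmaFinite (Measure.pi fun _ : Fin m => p.prod unifIcc) := by infer_instance
  rw [Measure.prod_apply hpre]
  refine lintegral_congr fun w => ?_
  have hsec : Prod.mk w ⁻¹' (e.symm ⁻¹' S) = Set.pi Set.univ (fun _ : Fin m => D r w) := by
    ext z
    simp only [Set.mem_preimage, Set.mem_pi, Set.mem_univ, forall_true_left, hS,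
      Set.mem_setOf_eq, he]
    simp [MeasurableEquiv.piFinSuccAbove_symm_apply, Fin.insertNth_zero, Fin.cons_succ,
      Fin.cons_zero]
  rw [hsec, Measure.pi_pi, Finset.prod_const, Finset.card_univ, Fintype.card_fin]

end SRS

namespace SRS2

open SRS

variable {T : Type} [Countable T] [MeasurableSpace T] [MeasurableSingletonClass T]

lemma unifIcc_Iio (u : ℝ) : unifIcc (Set.Iio u) = ENNReal.ofReal (min u 1) := by
  rw [unifIcc, Measure.restrict_apply measurableSet_Iio]
  rcases le_or_gt u 0 with h0 | h0
  · have h1 : Set.Iio u ∩ Set.Icc 0 1 = ∅ := by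
      ext x
      simp only [Set.mem_inter_iff, Set.mem_Iio, Set.mem_Icc, Set.mem_empty_iff_false, iff_false,
        not_and]
      intro hx hx0
      linarith
    rw [h1, min_eq_left (by linarith : u ≤ 1), measure_empty]
    exact (ENNReal.ofReal_eq_zero.mpr h0).symm
  · rcases le_or_gt u 1 with h1 | h1
    · have h2 : Set.Iio u ∩ Set.Icc 0 1 = Set.Ico 0 u := by
        ext x
        simp only [Set.mem_inter_iff, Set.mem_Iio, Set.mem_Icc, Set.mem_Ico]
        constructor
        · rintro ⟨hx, hx0, -⟩; exact ⟨hx0, hx⟩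
        · rintro ⟨hx0, hx⟩; exact ⟨hx, hx0, by linarith⟩
      rw [h2, Real.volume_Ico, min_eq_left h1, sub_zero]
    · have h2 : Set.Iio u ∩ Set.Icc 0 1 = Set.Icc 0 1 := by
        rw [Set.inter_eq_right]
        intro x hx
        exact lt_of_le_of_lt hx.2 h1
      rw [h2, Real.volume_Icc, min_eq_right h1.le, sub_zero]

lemma phi_meas (r : T → T → Prop) (hr : IsStrictTotalOrder T r) (p : PMF T) :
    Measurable (fun w : T × ℝ => (p.toMeasure.prod unifIcc) (D r w)) := by
  have heq : (fun w : T × ℝ => (p.toMeasure.prod unifIcc) (D r w)) =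
      fun w => p.toMeasure {t | r t w.1} + p.toMeasure {w.1} * ENNReal.ofReal (min w.2 1) := by
    funext w
    rw [measure_D r hr, unifIcc_Iio]
  rw [heq]
  refine Measurable.add ?_ (Measurable.mul ?_ ?_)
  · exact (measurable_of_countable (fun t => p.toMeasure {s | r s t})).comp measurable_fst
  · exact (measurable_of_countable (fun t => p.toMeasure {t})).comp measurable_fst
  · exact ENNReal.measurable_ofReal.comp (measurable_snd.min measurable_const)

lemma unifIcc_moments (n : ℕ) : ∫ x, x ^ n ∂unifIcc = ((n : ℝ) + 1)⁻¹ := by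
  rw [unifIcc]
  rw [show ∫ x, x ^ n ∂(volume.restrict (Set.Icc 0 1)) = ∫ x in Set.Icc (0:ℝ) 1, x ^ n from rfl]
  rw [MeasureTheory.integral_Icc_eq_integral_Ioc, ← intervalIntegral.integral_of_le zero_le_one,
    integral_pow]
  rw [one_pow, zero_pow (Nat.succ_ne_zero n), sub_zero, one_div]

lemma key (r : T → T → Prop) (hr : IsStrictTotalOrder T r) (p q : PMF T)
    (h : ∀ n : ℕ, 1 ≤ n →
      ∫⁻ w, ((p.toMeasure.prod unifIcc) (D r w)) ^ n ∂(q.toMeasure.prod unifIcc)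
        = ((n : ℝ≥0∞) + 1)⁻¹) :
    p = q := by
  haveI := hr
  set ν₁ := p.toMeasure.prod unifIcc with hν₁
  set ν₀ := q.toMeasure.prod unifIcc with hν₀
  set φ : T × ℝ → ℝ≥0∞ := fun w => ν₁ (D r w) with hφ
  set φR : T × ℝ → ℝ := fun w => (φ w).toReal with hφR
  have hφm : Measurable φ := phi_meas r hr p
  have hφRm : Measurable φR := hφm.ennreal_toReal
  have hφ_le : ∀ w, φ w ≤ 1 := fun w => prob_le_one
  have hφ_ne : ∀ w, φ w ≠ ⊤ := fun w => (lt_of_le_of_lt (hφ_le w) ENNReal.one_lt_top).ne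
  set ρ : Measure ℝ := ν₀.map φR with hρ
  haveI : IsProbabilityMeasure ρ := Measure.isProbabilityMeasure_map hφRm.aemeasurable
  -- supports
  have hρc : ρ (Set.Icc 0 1)ᶜ = 0 := by
    rw [hρ, Measure.map_apply hφRm measurableSet_Icc.compl]
    have : φR ⁻¹' (Set.Icc 0 1)ᶜ = ∅ := by
      ext w
      simp only [Set.mem_preimage, Set.mem_compl_iff, Set.mem_Icc, Set.mem_empty_iff_false,
        iff_false, not_not, Decidable.not_not]
      exact ⟨ENNReal.toReal_nonneg, by
        have := ENNReal.toReal_mono ENNReal.one_ne_top (hφ_le w)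
        simpa using this⟩
    rw [this, measure_empty]
  have hunifc : unifIcc (Set.Icc 0 1)ᶜ = 0 := by
    rw [unifIcc, Measure.restrict_apply measurableSet_Icc.compl, Set.compl_inter_self,
      measure_empty]
  -- moments of φ
  have hφ_mom : ∀ n : ℕ, ∫⁻ w, φ w ^ n ∂ν₀ = ((n : ℝ≥0∞) + 1)⁻¹ := by
    intro n
    rcases Nat.eq_zero_or_pos n with h0 | h0
    · subst h0
      simp only [pow_zero, lintegral_one, measure_univ, Nat.cast_zero, zero_add, inv_one]
    · exact h n h0
  -- moments of ρ
  have hρ_mom : ∀ n : ℕ, ∫ x, x ^ n ∂ρ = ((n : ℝ) + 1)⁻¹ := by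
    intro n
    rw [hρ, integral_map hφRm.aemeasurable (continuous_pow n).aestronglyMeasurable]
    rw [integral_eq_lintegral_of_nonneg_ae
      (Filter.Eventually.of_forall fun w => pow_nonneg ENNReal.toReal_nonneg n)
      ((hφRm.pow_const n).aestronglyMeasurable)]
    have heq : ∀ w, ENNReal.ofReal (φR w ^ n) = φ w ^ n := fun w => by
      rw [hφR]
      rw [← ENNReal.toReal_pow, ENNReal.ofReal_toReal (ENNReal.pow_ne_top (hφ_ne w))]
    simp_rw [show ∀ w, ENNReal.ofReal ((φ w).toReal ^ n) = φ w ^ n from heq]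
    rw [hφ_mom n, ENNReal.toReal_inv]
    rw [ENNReal.toReal_add (ENNReal.natCast_ne_top n) ENNReal.one_ne_top, ENNReal.toReal_one,
      ENNReal.toReal_natCast]
  have hρ_eq : ρ = unifIcc :=
    measure_eq_of_moments ρ unifIcc hρc hunifc (fun n => by rw [hρ_mom n, unifIcc_moments n])
  -- extraction
  have hsing : ∀ (pp : PMF T) (t : T), pp.toMeasure {t} = pp t := fun pp t =>
    pp.toMeasure_apply_singleton t (measurableSet_singleton t)
  apply PMF.ext
  intro t₀
  set a := p.toMeasure {s | r s t₀} with ha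
  set b := p.toMeasure {t₀} with hb
  have hane : a ≠ ⊤ := measure_ne_top _ _
  have hbne : b ≠ ⊤ := measure_ne_top _ _
  have hdis : Disjoint {s | r s t₀} ({t₀} : Set T) := by
    rw [Set.disjoint_left]
    intro x hx hx'
    rw [Set.mem_singleton_iff] at hx'
    exact absurd (hx' ▸ hx) (irrefl t₀)
  have hab : a + b ≤ 1 := by
    rw [ha, hb, ← measure_union hdis (measurableSet_singleton _)]
    exact prob_le_one
  have habne : a + b ≠ ⊤ := (lt_of_le_of_lt hab ENNReal.one_lt_top).ne
  have hφt : ∀ t (u : ℝ),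
      φ (t, u) = p.toMeasure {s | r s t} + p.toMeasure {t} * ENNReal.ofReal (min u 1) := by
    intro t u
    show ν₁ (D r (t, u)) = _
    rw [hν₁, measure_D r hr, unifIcc_Iio]
  have horder1 : ∀ t : T, r t t₀ → p.toMeasure {s | r s t} + p.toMeasure {t} ≤ a := by
    intro t ht
    have hdt : Disjoint {s | r s t} ({t} : Set T) := by
      rw [Set.disjoint_left]
      intro x hx hx'
      rw [Set.mem_singleton_iff] at hx'
      exact absurd (hx' ▸ hx) (irrefl t)
    rw [← measure_union hdt (measurableSet_singleton _)]
    apply measure_mono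
    rintro x (hx | hx)
    · exact trans_of r hx ht
    · rw [Set.mem_singleton_iff] at hx
      exact hx ▸ ht
  have horder2 : ∀ t : T, r t₀ t → a + b ≤ p.toMeasure {s | r s t} := by
    intro t ht
    rw [ha, hb, ← measure_union hdis (measurableSet_singleton _)]
    apply measure_mono
    rintro x (hx | hx)
    · exact trans_of r hx ht
    · rw [Set.mem_singleton_iff] at hx
      exact hx ▸ ht
  rw [← hsing p t₀, ← hsing q t₀]
  rcases eq_or_ne b 0 with hb0 | hb0
  · -- p t₀ has measure zero; then q t₀ is an atom of Lebesgue unless it is zero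
    have hval : ∀ u : ℝ, φ (t₀, u) = a := by
      intro u
      rw [hφt t₀ u, ← hb, hb0, zero_mul, add_zero]
    have h1 : q.toMeasure {t₀} ≤ ρ {a.toReal} := by
      rw [hρ, Measure.map_apply hφRm (measurableSet_singleton _)]
      have hsub : ({t₀} ×ˢ (Set.univ : Set ℝ)) ⊆ φR ⁻¹' {a.toReal} := by
        rintro ⟨t, u⟩ ⟨ht, -⟩
        rw [Set.mem_singleton_iff] at ht
        subst ht
        simp only [Set.mem_preimage, Set.mem_singleton_iff, hφR]
        rw [hval u]
      calc q.toMeasure {t₀} = ν₀ ({t₀} ×ˢ (Set.univ : Set ℝ)) := by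
            rw [hν₀, Measure.prod_prod, measure_univ, mul_one]
        _ ≤ _ := measure_mono hsub
    rw [hρ_eq] at h1
    have h2 : unifIcc {a.toReal} = 0 := by
      rw [unifIcc, Measure.restrict_apply (measurableSet_singleton _)]
      exact measure_mono_null Set.inter_subset_left Real.volume_singleton
    rw [← hb, hb0]
    exact (le_antisymm (h2 ▸ h1) zero_le).symm
  · -- p t₀ > 0
    have hpre : φR ⁻¹' (Set.Ioo a.toReal (a + b).toReal) = {t₀} ×ˢ Set.Ioo (0 : ℝ) 1 := by
      ext ⟨t, u⟩
      simp only [Set.mem_preimage, Set.mem_Ioo, Set.mem_prod, Set.mem_singleton_iff]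
      have hiff : (a.toReal < φR (t, u) ∧ φR (t, u) < (a + b).toReal) ↔
          (a < φ (t, u) ∧ φ (t, u) < a + b) := by
        rw [hφR]
        rw [ENNReal.toReal_lt_toReal hane (hφ_ne _), ENNReal.toReal_lt_toReal (hφ_ne _) habne]
      rw [hiff]
      constructor
      · rintro ⟨h1, h2⟩
        rcases trichotomous_of r t t₀ with hc | hc | hc
        · exfalso
          have hle : φ (t, u) ≤ a := by
            rw [hφt t u]
            calc p.toMeasure {s | r s t} + p.toMeasure {t} * ENNReal.ofReal (min u 1)
                ≤ p.toMeasure {s | r s t} + p.toMeasure {t} * 1 := by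
                  gcongr
                  exact ENNReal.ofReal_le_one.mpr (min_le_right u 1)
              _ = p.toMeasure {s | r s t} + p.toMeasure {t} := by rw [mul_one]
              _ ≤ a := horder1 t hc
          exact absurd h1 (not_lt.mpr hle)
        · refine ⟨hc, ?_, ?_⟩
          · by_contra hu
            push_neg at hu
            have heq0 : φ (t, u) = a := by
              rw [hφt t u, hc, ← ha, ← hb]
              have : min u 1 ≤ 0 := le_trans (min_le_left u 1) hu
              rw [ENNReal.ofReal_eq_zero.mpr this, mul_zero, add_zero]
            rw [heq0] at h1
            exact absurd h1 (lt_irrefl a)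
          · by_contra hu
            push_neg at hu
            have heq1 : φ (t, u) = a + b := by
              rw [hφt t u, hc, ← ha, ← hb, min_eq_right hu, ENNReal.ofReal_one, mul_one]
            rw [heq1] at h2
            exact absurd h2 (lt_irrefl _)
        · exfalso
          have hge : a + b ≤ φ (t, u) := by
            rw [hφt t u]
            exact le_trans (horder2 t hc) le_self_add
          exact absurd h2 (not_lt.mpr hge)
      · rintro ⟨ht, hu0, hu1⟩
        have hc0 : ENNReal.ofReal (min u 1) ≠ 0 := by
          rw [Ne, ENNReal.ofReal_eq_zero, not_le]
          exact lt_min hu0 one_pos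
        have hc1 : ENNReal.ofReal (min u 1) < 1 := by
          rw [← ENNReal.ofReal_one]
          exact ENNReal.ofReal_lt_ofReal_iff_of_nonneg (le_min hu0.le zero_le_one) |>.mpr
            (min_lt_iff.mpr (Or.inl hu1))
        have hφeq : φ (t, u) = a + b * ENNReal.ofReal (min u 1) := by
          rw [hφt t u, ht, ← ha, ← hb]
        rw [hφeq]
        constructor
        · exact ENNReal.lt_add_right hane (mul_ne_zero hb0 hc0)
        · rw [ENNReal.add_lt_add_iff_left hane]
          calc b * ENNReal.ofReal (min u 1) < b * 1 :=
                (ENNReal.mul_lt_mul_iff_right hb0 hbne).mpr hc1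
            _ = b := mul_one b
    have hcomp : ρ (Set.Ioo a.toReal (a + b).toReal) = q.toMeasure {t₀} := by
      rw [hρ, Measure.map_apply hφRm measurableSet_Ioo, hpre, hν₀, Measure.prod_prod]
      have : unifIcc (Set.Ioo (0 : ℝ) 1) = 1 := by
        rw [unifIcc, Measure.restrict_apply measurableSet_Ioo,
          Set.inter_eq_left.mpr Set.Ioo_subset_Icc_self, Real.volume_Ioo]
        norm_num
      rw [this, mul_one]
    have hleb : unifIcc (Set.Ioo a.toReal (a + b).toReal) = b := by
      rw [unifIcc, Measure.restrict_apply measurableSet_Ioo]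
      have hsub : Set.Ioo a.toReal (a + b).toReal ⊆ Set.Icc 0 1 := by
        intro x hx
        refine ⟨le_trans ENNReal.toReal_nonneg hx.1.le, hx.2.le.trans ?_⟩
        have := ENNReal.toReal_mono ENNReal.one_ne_top hab
        simpa using this
      rw [Set.inter_eq_left.mpr hsub, Real.volume_Ioo, ENNReal.toReal_add hane hbne,
        add_sub_cancel_left, ENNReal.ofReal_toReal hbne]
    rw [hρ_eq] at hcomp
    rw [← hb, ← hcomp]
    exact hleb.symm

end SRS2

/-- **Corollary (consistency).** If `p ≠ q`, then there is some `M ≥ 1` such that the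
stochastic rank statistic computed with `m = M` resampled points is not uniformly
distributed on `{0, 1, …, M}`. -/
theorem srs_exists_nonuniform
    {T : Type} [Countable T] [Nonempty T] [MeasurableSpace T] [MeasurableSingletonClass T]
    (r : T → T → Prop) (hr : IsStrictTotalOrder T r) (p q : PMF T) (hpq : p ≠ q) :
    ∃ M : ℕ, 1 ≤ M ∧
      ∀ (Ω : Type) (_ : MeasurableSpace Ω) (μ : Measure Ω), IsProbabilityMeasure μ →
        ∀ (X : Fin (M + 1) → Ω → T) (U : Fin (M + 1) → Ω → ℝ),
          IsRankSetup μ p.toMeasure q.toMeasure M X U →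
          ¬ (∀ k : ℕ, k ≤ M →
              μ {ω | rankStat r M X U ω = k} = ((M : ℝ≥0∞) + 1)⁻¹) := by
  by_contra hcon
  push_neg at hcon
  apply hpq
  refine SRS2.key r hr p q ?_
  intro n hn
  obtain ⟨Ω, mΩ, μ, hμ, X, U, hsetup, hunif⟩ := hcon n hn
  haveI := hμ
  haveI : IsProbabilityMeasure p.toMeasure := PMF.toMeasure.isProbabilityMeasure p
  haveI : IsProbabilityMeasure q.toMeasure := PMF.toMeasure.isProbabilityMeasure q
  have hdist := SRS.rank_dist r hr p.toMeasure q.toMeasure n μ X U hsetup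
  rw [← hdist]
  exact hunif n le_rfl

end
end

section
/- Suppose p ≠ q and M ≥ 1 is an integer such that the stochastic rank statistic computed with m = M resampled points is not uniformly distributed on {0,1,…,M}. Then for every integer m ≥ M, the stochastic rank statistic computed with m resampled points is not uniformly distributed on {0,1,…,m}. -/
open MeasureTheory ProbabilityTheory
open scoped ENNReal

noncomputable section

set_option linter.unusedSectionVars false

instance inst_s2 : IsProbabilityMeasure unifIcc :=
  ⟨by simp [unifIcc, Real.volume_Icc]⟩

section Aux

variable {T : Type} [Countable T] [Nonempty T] [MeasurableSpace T] [MeasurableSingletonClass T]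

lemma measSet_of_countable {α : Type*} [MeasurableSpace α] [Countable α]
    [MeasurableSingletonClass α] (s : Set α) : MeasurableSet s :=
  (Set.to_countable s).measurableSet

def eset (r : T → T → Prop) (z : T × ℝ) : Set (T × ℝ) :=
  {w | r w.1 z.1 ∨ (w.1 = z.1 ∧ w.2 < z.2)}

lemma measurableSet_E (r : T → T → Prop) :
    MeasurableSet {x : (T × ℝ) × (T × ℝ) | x.2 ∈ eset r x.1} := by
  have h1 : Measurable fun x : (T × ℝ) × (T × ℝ) => (x.2.1, x.1.1) :=
    (measurable_snd.fst).prodMk (measurable_fst.fst)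
  have heq : {x : (T × ℝ) × (T × ℝ) | x.2 ∈ eset r x.1}
      = ((fun x : (T × ℝ) × (T × ℝ) => (x.2.1, x.1.1)) ⁻¹' {y : T × T | r y.1 y.2})
        ∪ (((fun x : (T × ℝ) × (T × ℝ) => (x.2.1, x.1.1)) ⁻¹' {y : T × T | y.1 = y.2})
            ∩ {x : (T × ℝ) × (T × ℝ) | x.2.2 < x.1.2}) := by
    ext x
    simp only [eset, Set.mem_setOf_eq, Set.mem_union, Set.mem_preimage, Set.mem_inter_iff]
  rw [heq]
  exact (h1 (measSet_of_countable _)).union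
    ((h1 (measSet_of_countable _)).inter
      (measurableSet_lt (measurable_snd.snd) (measurable_fst.snd)))

lemma measurableSet_eset (r : T → T → Prop) (z : T × ℝ) : MeasurableSet (eset r z) := by
  have heq : eset r z = Prod.mk z ⁻¹' {x : (T × ℝ) × (T × ℝ) | x.2 ∈ eset r x.1} := rfl
  rw [heq]
  exact measurable_prodMk_left (measurableSet_E r)

def gfun (r : T → T → Prop) (p : Measure T) (z : T × ℝ) : ℝ≥0∞ :=
  (p.prod unifIcc) (eset r z)

lemma measurable_gfun (r : T → T → Prop) (p : Measure T) [IsProbabilityMeasure p] :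
    Measurable (gfun r p) :=
  measurable_measure_prodMk_left (measurableSet_E r)

lemma gfun_le_one (r : T → T → Prop) (p : Measure T) [IsProbabilityMeasure p] (z : T × ℝ) :
    gfun r p z ≤ 1 :=
  prob_le_one

def cval (r : T → T → Prop) (p q : Measure T) (m k : ℕ) : ℝ≥0∞ :=
  ∫⁻ z, (m.choose k : ℝ≥0∞) * gfun r p z ^ k * (1 - gfun r p z) ^ (m - k) ∂(q.prod unifIcc)

open scoped Classical in
lemma pi_binomial {β : Type} [MeasurableSpace β] (κ : Measure β) [IsProbabilityMeasure κ]
    {A : Set β} (hA : MeasurableSet A) (m k : ℕ) :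
    (Measure.pi fun _ : Fin m => κ) {w | (∑ j, if w j ∈ A then 1 else 0 : ℕ) = k}
      = (m.choose k : ℝ≥0∞) * κ A ^ k * (1 - κ A) ^ (m - k) := by
  classical
  have hset : {w : Fin m → β | (∑ j, if w j ∈ A then 1 else 0 : ℕ) = k}
      = ⋃ S ∈ Finset.powersetCard k (Finset.univ : Finset (Fin m)),
          Set.pi Set.univ (fun j => if j ∈ S then A else Aᶜ) := by
    ext w
    simp only [Set.mem_setOf_eq, Set.mem_iUnion, Finset.mem_powersetCard_univ, Set.mem_pi,
      Set.mem_univ, forall_true_left, exists_prop]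
    constructor
    · intro h
      refine ⟨Finset.univ.filter (fun j => w j ∈ A), ?_, ?_⟩
      · rw [← h, Finset.sum_boole]; simp
      · intro j
        by_cases hj : w j ∈ A <;> simp [Finset.mem_filter, hj]
    · rintro ⟨S, hcard, hmem⟩
      rw [Finset.sum_boole]
      have : Finset.univ.filter (fun j => w j ∈ A) = S := by
        ext j
        simp only [Finset.mem_filter, Finset.mem_univ, true_and]
        constructor
        · intro hwj
          by_contra hjS
          have := hmem j
          rw [if_neg hjS] at this
          exact this hwj
        · intro hjS
          have := hmem j
          rwa [if_pos hjS] at this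
      rw [this, hcard]; simp
  have hdisj : Set.PairwiseDisjoint
      ↑(Finset.powersetCard k (Finset.univ : Finset (Fin m)))
      (fun S : Finset (Fin m) => Set.pi Set.univ (fun j => if j ∈ S then A else Aᶜ)) := by
    intro S _ S' _ hne
    rw [Function.onFun, Set.disjoint_left]
    intro w hw hw'
    apply hne
    ext j
    have h1 := hw j (Set.mem_univ j)
    have h2 := hw' j (Set.mem_univ j)
    dsimp only at h1 h2
    constructor
    · intro hj
      rw [if_pos hj] at h1
      by_contra hj'
      rw [if_neg hj'] at h2
      exact h2 h1
    · intro hj'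
      rw [if_pos hj'] at h2
      by_contra hj
      rw [if_neg hj] at h1
      exact h1 h2
  have hmeas : ∀ S ∈ Finset.powersetCard k (Finset.univ : Finset (Fin m)),
      MeasurableSet (Set.pi Set.univ (fun j => if j ∈ S then A else Aᶜ)) := by
    intro S _
    exact MeasurableSet.univ_pi fun j => by
      by_cases hj : j ∈ S
      · rw [if_pos hj]; exact hA
      · rw [if_neg hj]; exact hA.compl
  rw [hset, measure_biUnion_finset hdisj hmeas]
  have hval : ∀ S ∈ Finset.powersetCard k (Finset.univ : Finset (Fin m)),
      (Measure.pi fun _ : Fin m => κ) (Set.pi Set.univ (fun j => if j ∈ S then A else Aᶜ))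
        = κ A ^ k * (1 - κ A) ^ (m - k) := by
    intro S hS
    rw [Finset.mem_powersetCard_univ] at hS
    rw [Measure.pi_pi]
    rw [← Finset.prod_sdiff (Finset.subset_univ S)]
    have h1 : ∏ j ∈ S, κ (if j ∈ S then A else Aᶜ) = κ A ^ k := by
      rw [Finset.prod_congr rfl fun j hj => by rw [if_pos hj], Finset.prod_const, hS]
    have h2 : ∏ j ∈ Finset.univ \ S, κ (if j ∈ S then A else Aᶜ) = (1 - κ A) ^ (m - k) := by
      rw [Finset.prod_congr rfl fun j hj => by
        rw [if_neg (Finset.mem_sdiff.mp hj).2, prob_compl_eq_one_sub hA],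
        Finset.prod_const, Finset.card_sdiff_of_subset (Finset.subset_univ S), hS,
        Finset.card_univ, Fintype.card_fin]
    rw [h1, h2, mul_comm]
  rw [Finset.sum_congr rfl hval, Finset.sum_const, Finset.card_powersetCard,
    Finset.card_univ, Fintype.card_fin, nsmul_eq_mul, mul_assoc]

lemma map_eq_pi {Ω : Type} [MeasurableSpace Ω] (μ : Measure Ω) [IsProbabilityMeasure μ]
    {ι : Type} [Fintype ι] {β : ι → Type} [mβ : ∀ i, MeasurableSpace (β i)]
    (Y : ∀ i, Ω → β i) (hY : ∀ i, Measurable (Y i))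
    (hind : iIndepFun Y μ) :
    μ.map (fun ω i => Y i ω) = Measure.pi (fun i => μ.map (Y i)) := by
  haveI : ∀ i, IsProbabilityMeasure (μ.map (Y i)) :=
    fun i => Measure.isProbabilityMeasure_map (hY i).aemeasurable
  refine (Measure.pi_eq fun s hs => ?_).symm
  rw [Measure.map_apply (measurable_pi_lambda _ hY) (MeasurableSet.univ_pi hs)]
  have hpre : (fun ω i => Y i ω) ⁻¹' Set.pi Set.univ s = ⋂ i ∈ Finset.univ, Y i ⁻¹' s i := by
    ext ω; simp [Set.mem_pi]
  rw [hpre, hind.measure_inter_preimage_eq_mul Finset.univ (fun i _ => hs i)]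
  exact Finset.prod_congr rfl fun i _ => (Measure.map_apply (hY i) (hs i)).symm

lemma rank_law (r : T → T → Prop) (p q : Measure T)
    [IsProbabilityMeasure p] [IsProbabilityMeasure q]
    (hirr : ∀ a : T, ¬ r a a)
    {Ω : Type} [MeasurableSpace Ω] (μ : Measure Ω) [IsProbabilityMeasure μ]
    {m : ℕ} {X : Fin (m + 1) → Ω → T} {U : Fin (m + 1) → Ω → ℝ}
    (hs : IsRankSetup μ p q m X U) (k : ℕ) :
    μ {ω | rankStat r m X U ω = k} = cval r p q m k := by
  classical
  obtain ⟨hX, hU, hind, h0, hsucc⟩ := hs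
  set Y : ∀ _ : Fin (m + 1), Ω → T × ℝ := fun i ω => (X i ω, U i ω) with hYdef
  have hYm : ∀ i, Measurable (Y i) := fun i => (hX i).prodMk (hU i)
  set ν : Fin (m + 1) → Measure (T × ℝ) :=
    fun i => Fin.cases (q.prod unifIcc) (fun _ => p.prod unifIcc) i with hν
  haveI hνP : ∀ i, IsProbabilityMeasure (ν i) := by
    intro i
    induction i using Fin.cases with
    | zero => rw [hν]; simp only [Fin.cases_zero]; infer_instance
    | succ j => rw [hν]; simp only [Fin.cases_succ]; infer_instance
  have hmap : μ.map (fun ω i => Y i ω) = Measure.pi ν := by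
    rw [map_eq_pi μ Y hYm hind]
    have : (fun i => μ.map (Y i)) = ν := by
      funext i
      induction i using Fin.cases with
      | zero => rw [hν]; simpa using h0
      | succ j => rw [hν]; simpa using hsucc j.succ (Fin.succ_ne_zero j)
    rw [this]
  -- event sets
  have hEj : ∀ j : Fin m, MeasurableSet {y : Fin (m + 1) → T × ℝ | y j.succ ∈ eset r (y 0)} := by
    intro j
    have heq : {y : Fin (m + 1) → T × ℝ | y j.succ ∈ eset r (y 0)}
        = (fun y : Fin (m + 1) → T × ℝ => (y 0, y j.succ))
          ⁻¹' {x : (T × ℝ) × (T × ℝ) | x.2 ∈ eset r x.1} := rfl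
    rw [heq]
    exact ((measurable_pi_apply 0).prodMk (measurable_pi_apply j.succ)) (measurableSet_E r)
  set Ek : Set (Fin (m + 1) → T × ℝ) :=
    {y | (∑ j : Fin m, if y j.succ ∈ eset r (y 0) then 1 else 0 : ℕ) = k} with hEk
  have hEkm : MeasurableSet Ek := by
    have hfm : Measurable fun y : Fin (m + 1) → T × ℝ =>
        (∑ j : Fin m, if y j.succ ∈ eset r (y 0) then 1 else 0 : ℕ) :=
      Finset.measurable_sum _ fun j _ => Measurable.ite (hEj j) measurable_const measurable_const
    exact hfm (measurableSet_singleton k)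
  have hpre : {ω | rankStat r m X U ω = k} = (fun ω i => Y i ω) ⁻¹' Ek := by
    ext ω
    have hRS : rankStat r m X U ω
        = ∑ j : Fin m, (if ((X j.succ ω, U j.succ ω) : T × ℝ) ∈ eset r (X 0 ω, U 0 ω)
            then 1 else 0 : ℕ) := by
      unfold rankStat
      refine Finset.sum_congr rfl fun j _ => ?_
      by_cases h1 : r (X j.succ ω) (X 0 ω)
      · have h2 : ¬ (X j.succ ω = X 0 ω ∧ U j.succ ω < U 0 ω) := by
          rintro ⟨he, -⟩
          rw [he] at h1
          exact hirr _ h1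
        simp [eset, h1, h2]
      · by_cases h2 : X j.succ ω = X 0 ω ∧ U j.succ ω < U 0 ω
        · simp [eset, h1, h2, hirr (X 0 ω)]
        · simp [eset, h1, h2]
    simp only [Set.mem_setOf_eq, Set.mem_preimage, hEk, hRS]
    exact Iff.rfl
  rw [hpre, ← Measure.map_apply (measurable_pi_lambda _ hYm) hEkm, hmap]
  -- decompose the product along the first coordinate
  set s' : Set ((T × ℝ) × (Fin m → T × ℝ)) :=
    {x | (∑ j : Fin m, if x.2 j ∈ eset r x.1 then 1 else 0 : ℕ) = k} with hs'
  have hs'm : MeasurableSet s' := by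
    have hfm : Measurable fun x : (T × ℝ) × (Fin m → T × ℝ) =>
        (∑ j : Fin m, if x.2 j ∈ eset r x.1 then 1 else 0 : ℕ) :=
      Finset.measurable_sum _ fun j _ => by
        have heq : {x : (T × ℝ) × (Fin m → T × ℝ) | x.2 j ∈ eset r x.1}
            = (fun x : (T × ℝ) × (Fin m → T × ℝ) => (x.1, x.2 j))
              ⁻¹' {x : (T × ℝ) × (T × ℝ) | x.2 ∈ eset r x.1} := rfl
        exact Measurable.ite (heq ▸ (measurable_fst.prodMk
          ((measurable_pi_apply j).comp measurable_snd)) (measurableSet_E r))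
          measurable_const measurable_const
    exact hfm (measurableSet_singleton k)
  have hmp := measurePreserving_piFinSuccAbove ν 0
  have hEks : Ek = (MeasurableEquiv.piFinSuccAbove (fun _ : Fin (m + 1) => T × ℝ) 0) ⁻¹' s' := by
    ext y
    simp only [hEk, hs', Set.mem_setOf_eq, Set.mem_preimage,
      MeasurableEquiv.piFinSuccAbove_apply, Fin.insertNthEquiv_symm_apply, Fin.removeNth,
      Fin.zero_succAbove]
    exact Iff.rfl
  rw [hEks, hmp.measure_preimage hs'm.nullMeasurableSet]
  have hpi' : (Measure.pi fun j : Fin m => ν ((0 : Fin (m + 1)).succAbove j))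
      = Measure.pi fun _ : Fin m => p.prod unifIcc := by
    congr 1
  rw [hpi']
  have hν0 : ν 0 = q.prod unifIcc := by rw [hν]; simp
  rw [hν0, Measure.prod_apply hs'm]
  refine lintegral_congr fun z => ?_
  have : Prod.mk z ⁻¹' s' = {w : Fin m → T × ℝ | (∑ j, if w j ∈ eset r z then 1 else 0 : ℕ) = k} :=
    rfl
  rw [this, pi_binomial (p.prod unifIcc) (measurableSet_eset r z) m k]
  rfl


variable {T : Type} [Countable T] [Nonempty T] [MeasurableSpace T] [MeasurableSingletonClass T]

lemma bernstein_step (n k : ℕ) (hk : k ≤ n) (x : ℝ≥0∞) (hx : x ≤ 1) :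
    ((n : ℝ≥0∞) + 1) * ((n.choose k : ℝ≥0∞) * x ^ k * (1 - x) ^ (n - k))
      = ((n + 1 - k : ℕ) : ℝ≥0∞) * (((n + 1).choose k : ℝ≥0∞) * x ^ k * (1 - x) ^ (n + 1 - k))
        + ((k + 1 : ℕ) : ℝ≥0∞) * (((n + 1).choose (k + 1) : ℝ≥0∞) * x ^ (k + 1) * (1 - x) ^ (n - k)) := by
  have hy : (1 - x) + x = 1 := tsub_add_cancel_of_le hx
  have he : n + 1 - k = (n - k) + 1 := by omega
  have c1n : (n + 1 - k) * ((n + 1).choose k) = (n + 1) * n.choose k := by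
    rw [mul_comm, ← Nat.choose_mul_succ_eq, mul_comm]
  have c2n : (k + 1) * ((n + 1).choose (k + 1)) = (n + 1) * n.choose k := by
    rw [mul_comm]
    exact (Nat.add_one_mul_choose_eq n k).symm
  have hc1 : ((n + 1 - k : ℕ) : ℝ≥0∞) * (((n + 1).choose k : ℕ) : ℝ≥0∞)
      = ((n : ℝ≥0∞) + 1) * ((n.choose k : ℕ) : ℝ≥0∞) := by
    rw [← Nat.cast_mul, c1n, Nat.cast_mul]
    push_cast
    ring
  have hc2 : ((k + 1 : ℕ) : ℝ≥0∞) * (((n + 1).choose (k + 1) : ℕ) : ℝ≥0∞)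
      = ((n : ℝ≥0∞) + 1) * ((n.choose k : ℕ) : ℝ≥0∞) := by
    rw [← Nat.cast_mul, c2n, Nat.cast_mul]
    push_cast
    ring
  have hp : (1 - x) ^ (n + 1 - k) = (1 - x) ^ (n - k) * (1 - x) := by rw [he, pow_succ]
  rw [hp, pow_succ]
  calc ((n : ℝ≥0∞) + 1) * ((n.choose k : ℝ≥0∞) * x ^ k * (1 - x) ^ (n - k))
      = (((n + 1 - k : ℕ) : ℝ≥0∞) * (((n + 1).choose k : ℕ) : ℝ≥0∞))
          * (x ^ k * (1 - x) ^ (n - k)) * (1 - x)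
        + (((k + 1 : ℕ) : ℝ≥0∞) * (((n + 1).choose (k + 1) : ℕ) : ℝ≥0∞))
          * (x ^ k * (1 - x) ^ (n - k)) * x := by
        rw [hc1, hc2, ← mul_add, hy, mul_one]
        ring
    _ = _ := by ring

lemma measurable_integrand (r : T → T → Prop) (p : Measure T) [IsProbabilityMeasure p]
    (m k : ℕ) :
    Measurable fun z : T × ℝ =>
      (m.choose k : ℝ≥0∞) * gfun r p z ^ k * (1 - gfun r p z) ^ (m - k) := by
  have hg := measurable_gfun r p
  exact ((measurable_const.mul (hg.pow_const k)).mul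
    ((measurable_const.sub hg).pow_const (m - k)))

lemma step_down (r : T → T → Prop) (p q : Measure T)
    [IsProbabilityMeasure p] [IsProbabilityMeasure q] (n : ℕ)
    (h : ∀ j ≤ n + 1, cval r p q (n + 1) j = (((n : ℝ≥0∞) + 1) + 1)⁻¹) :
    ∀ k ≤ n, cval r p q n k = ((n : ℝ≥0∞) + 1)⁻¹ := by
  intro k hk
  have hL : ((n : ℝ≥0∞) + 1) * cval r p q n k
      = ((n + 1 - k : ℕ) : ℝ≥0∞) * cval r p q (n + 1) k
        + ((k + 1 : ℕ) : ℝ≥0∞) * cval r p q (n + 1) (k + 1) := by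
    unfold cval
    rw [← lintegral_const_mul _ (measurable_integrand r p n k),
      ← lintegral_const_mul _ (measurable_integrand r p (n + 1) k),
      ← lintegral_const_mul _ (measurable_integrand r p (n + 1) (k + 1)),
      ← lintegral_add_left ((measurable_integrand r p (n + 1) k).const_mul _)]
    simp only [Nat.succ_sub_succ]
    exact lintegral_congr fun z => bernstein_step n k hk (gfun r p z) (gfun_le_one r p z)
  rw [h k (le_trans hk (Nat.le_succ n)), h (k + 1) (Nat.succ_le_succ hk)] at hL
  have hsum : ((n + 1 - k : ℕ) : ℝ≥0∞) * (((n : ℝ≥0∞) + 1) + 1)⁻¹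
      + ((k + 1 : ℕ) : ℝ≥0∞) * (((n : ℝ≥0∞) + 1) + 1)⁻¹ = 1 := by
    rw [← add_mul, ← Nat.cast_add]
    have hnk : (n + 1 - k) + (k + 1) = n + 2 := by omega
    rw [hnk]
    have h2 : ((n + 2 : ℕ) : ℝ≥0∞) = ((n : ℝ≥0∞) + 1) + 1 := by push_cast; ring
    rw [h2]
    exact ENNReal.mul_inv_cancel (by simp)
      (ENNReal.add_ne_top.mpr ⟨ENNReal.add_ne_top.mpr ⟨ENNReal.natCast_ne_top n,
        ENNReal.one_ne_top⟩, ENNReal.one_ne_top⟩)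
  rw [hsum] at hL
  have hne : ((n : ℝ≥0∞) + 1) ≠ 0 := by simp
  have hnt : ((n : ℝ≥0∞) + 1) ≠ ⊤ :=
    ENNReal.add_ne_top.mpr ⟨ENNReal.natCast_ne_top n, ENNReal.one_ne_top⟩
  calc cval r p q n k = (((n : ℝ≥0∞) + 1)⁻¹ * ((n : ℝ≥0∞) + 1)) * cval r p q n k := by
        rw [ENNReal.inv_mul_cancel hne hnt, one_mul]
    _ = ((n : ℝ≥0∞) + 1)⁻¹ * (((n : ℝ≥0∞) + 1) * cval r p q n k) := by rw [mul_assoc]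
    _ = ((n : ℝ≥0∞) + 1)⁻¹ := by rw [hL, mul_one]

lemma descend (r : T → T → Prop) (p q : Measure T)
    [IsProbabilityMeasure p] [IsProbabilityMeasure q] (M : ℕ) :
    ∀ d : ℕ, (∀ j ≤ M + d, cval r p q (M + d) j = (((M + d : ℕ) : ℝ≥0∞) + 1)⁻¹) →
      ∀ k ≤ M, cval r p q M k = ((M : ℝ≥0∞) + 1)⁻¹ := by
  intro d
  induction d with
  | zero => intro h k hk; simpa using h k hk
  | succ d ih =>
      intro h k hk
      refine ih ?_ k hk
      refine step_down r p q (M + d) ?_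
      intro j hj
      have hval := h j (by omega)
      have hcast : (((M + (d + 1) : ℕ) : ℝ≥0∞) + 1) = (((M + d : ℕ) : ℝ≥0∞) + 1) + 1 := by
        push_cast; ring
      rw [show M + (d + 1) = (M + d) + 1 from rfl] at hval
      rw [hval]
      congr 1

end Aux

/-- **Theorem (non-uniformity for all larger `m`).** Suppose `p ≠ q` and `M ≥ 1` is such
that the stochastic rank statistic computed with `m = M` resampled points is not uniformly
distributed on `{0, …, M}` (witnessed by some setup).  Then for every `m ≥ M`, the
stochastic rank statistic computed with `m` resampled points is not uniformly distributed
on `{0, …, m}`. -/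
theorem srs_nonuniform_of_ge
    {T : Type} [Countable T] [Nonempty T] [MeasurableSpace T] [MeasurableSingletonClass T]
    (r : T → T → Prop) (hr : IsStrictTotalOrder T r) (p q : PMF T) (hpq : p ≠ q)
    (M : ℕ) (hM : 1 ≤ M)
    (hwitness :
      ∃ (Ω : Type) (_ : MeasurableSpace Ω) (μ : Measure Ω) (_ : IsProbabilityMeasure μ)
        (X : Fin (M + 1) → Ω → T) (U : Fin (M + 1) → Ω → ℝ),
        IsRankSetup μ p.toMeasure q.toMeasure M X U ∧
        ¬ (∀ k : ℕ, k ≤ M →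
            μ {ω | rankStat r M X U ω = k} = ((M : ℝ≥0∞) + 1)⁻¹)) :
    ∀ m : ℕ, M ≤ m →
      ∀ (Ω : Type) (_ : MeasurableSpace Ω) (μ : Measure Ω), IsProbabilityMeasure μ →
        ∀ (X : Fin (m + 1) → Ω → T) (U : Fin (m + 1) → Ω → ℝ),
          IsRankSetup μ p.toMeasure q.toMeasure m X U →
          ¬ (∀ k : ℕ, k ≤ m →
              μ {ω | rankStat r m X U ω = k} = ((m : ℝ≥0∞) + 1)⁻¹) := by
  intro m hm Ω mΩ μ hμ X U hsetup huni
  obtain ⟨Ω', mΩ', μ', hμ', X', U', hsetup', hnot⟩ := hwitness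
  have hirr : ∀ a : T, ¬ r a a := fun a => Std.Irrefl.irrefl a
  apply hnot
  intro k hk
  rw [rank_law r p.toMeasure q.toMeasure hirr μ' hsetup' k]
  have hcm : ∀ j ≤ m, cval r p.toMeasure q.toMeasure m j = ((m : ℝ≥0∞) + 1)⁻¹ := by
    intro j hj
    rw [← rank_law r p.toMeasure q.toMeasure hirr μ hsetup j]
    exact huni j hj
  obtain ⟨d, rfl⟩ := Nat.exists_eq_add_of_le hm
  exact descend r p.toMeasure q.toMeasure M d hcm k hk


end
end

section
/- Let T₀, T₁, …, T_m be an i.i.d. sequence of random variables taking values in a linearly ordered measurable space, and suppose P(T_i = T_j) = 0 for all distinct indices i and j. Then for every i ∈ {0,…,m}, the rank statistic S_i := Σ_{j=0}^{m} 1[T_j < T_i] is uniformly distributed on {0,1,…,m}. -/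
open MeasureTheory ProbabilityTheory
open scoped ENNReal

section RankAux

variable {β : Type} [LinearOrder β]

private def rnk {m : ℕ} (x : Fin (m + 1) → β) (i : Fin (m + 1)) : ℕ :=
  ∑ j : Fin (m + 1), if x j < x i then 1 else 0

private lemma rnk_eq_card {m : ℕ} (x : Fin (m + 1) → β) (i : Fin (m + 1)) :
    rnk x i = (Finset.univ.filter (fun j => x j < x i)).card := by
  classical
  rw [Finset.card_filter]
  rfl

private lemma rnk_lt_rnk {m : ℕ} {x : Fin (m + 1) → β} {a b : Fin (m + 1)}
    (h : x a < x b) : rnk x a < rnk x b := by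
  classical
  rw [rnk_eq_card, rnk_eq_card]
  apply Finset.card_lt_card
  constructor
  · intro j hj
    simp only [Finset.mem_filter, Finset.mem_univ, true_and] at *
    exact hj.trans h
  · intro hsub
    have := hsub (Finset.mem_filter.mpr ⟨Finset.mem_univ a, h⟩)
    simp only [Finset.mem_filter, Finset.mem_univ, true_and] at this
    exact absurd this (lt_irrefl _)

private lemma rnk_le {m : ℕ} (x : Fin (m + 1) → β) (i : Fin (m + 1)) :
    rnk x i ≤ m := by
  classical
  rw [rnk_eq_card]
  have hsub : Finset.univ.filter (fun j => x j < x i) ⊆ Finset.univ.erase i := by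
    intro j hj
    simp only [Finset.mem_filter, Finset.mem_univ, true_and] at hj
    exact Finset.mem_erase.mpr ⟨fun h => absurd (h ▸ hj) (lt_irrefl _), Finset.mem_univ j⟩
  calc (Finset.univ.filter (fun j => x j < x i)).card
      ≤ (Finset.univ.erase i).card := Finset.card_le_card hsub
    _ = m := by simp [Finset.card_erase_of_mem]

private lemma rnk_ne {m : ℕ} {x : Fin (m + 1) → β} {a b : Fin (m + 1)}
    (h : x a ≠ x b) : rnk x a ≠ rnk x b := by
  rcases h.lt_or_gt with h' | h'
  · exact (rnk_lt_rnk h').ne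
  · exact (rnk_lt_rnk h').ne'

private lemma exists_rnk_eq {m : ℕ} {x : Fin (m + 1) → β}
    (hx : Function.Injective x) {k : ℕ} (hk : k ≤ m) : ∃ i, rnk x i = k := by
  have hinj : Function.Injective (fun i => (⟨rnk x i, Nat.lt_succ_of_le (rnk_le x i)⟩ :
      Fin (m + 1))) := by
    intro a b hab
    by_contra hne
    exact rnk_ne (fun h => hne (hx h)) (by simpa using congrArg Fin.val hab)
  have hsurj := Finite.surjective_of_injective hinj
  obtain ⟨i, hi⟩ := hsurj ⟨k, Nat.lt_succ_of_le hk⟩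
  exact ⟨i, by simpa using congrArg Fin.val hi⟩

private lemma rnk_comp {m : ℕ} (x : Fin (m + 1) → β) (σ : Equiv.Perm (Fin (m + 1)))
    (i : Fin (m + 1)) : rnk (x ∘ σ) i = rnk x (σ i) := by
  classical
  unfold rnk
  exact Equiv.sum_comp σ (fun j => if x j < x (σ i) then 1 else 0)

end RankAux

open MeasureTheory ProbabilityTheory
open scoped ENNReal

/-- **Lemma (uniformity of rank statistics).** Let `T 0, T 1, …, T m` be an i.i.d. sequence
of random variables taking values in a linearly ordered measurable space whose strict-order
relation is measurable, and suppose `P(T i = T j) = 0` for all distinct `i` and `j`.  Then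
for every `i`, the rank statistic `S i = ∑_{j=0}^m 1[T j < T i]` is uniformly distributed
on `{0, 1, …, m}`. -/
theorem rank_of_iid_uniform
    {Ω β : Type} [MeasurableSpace Ω] [MeasurableSpace β] [LinearOrder β]
    (hlt : MeasurableSet {z : β × β | z.1 < z.2})
    (μ : Measure Ω) [IsProbabilityMeasure μ] (m : ℕ)
    (f : Fin (m + 1) → Ω → β)
    (hmeas : ∀ i, Measurable (f i))
    (hindep : iIndepFun f μ)
    (hident : ∀ i j : Fin (m + 1), μ.map (f i) = μ.map (f j))
    (hdistinct : ∀ i j : Fin (m + 1), i ≠ j → μ {ω | f i ω = f j ω} = 0) :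
    ∀ i : Fin (m + 1), ∀ k : ℕ, k ≤ m →
      μ {ω | (∑ j : Fin (m + 1), if f j ω < f i ω then 1 else 0) = k}
        = ((m : ℝ≥0∞) + 1)⁻¹ := by
  classical
  intro i k hk
  set ν : Measure β := μ.map (f 0) with hν
  haveI : IsProbabilityMeasure ν := Measure.isProbabilityMeasure_map (hmeas 0).aemeasurable
  set π : Measure (Fin (m + 1) → β) := Measure.pi (fun _ => ν) with hπdef
  haveI : IsProbabilityMeasure π := by
    constructor
    rw [hπdef, ← Set.pi_univ Set.univ, Measure.pi_pi]
    simp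
  set g : Ω → (Fin (m + 1) → β) := fun ω j => f j ω with hg
  have hgmeas : Measurable g := measurable_pi_lambda _ hmeas
  -- the joint law is the product measure
  have hmap : π = μ.map g := by
    refine Measure.pi_eq fun s hs => ?_
    rw [Measure.map_apply hgmeas (MeasurableSet.univ_pi hs)]
    have hpre : g ⁻¹' Set.pi Set.univ s = ⋂ j ∈ Finset.univ, f j ⁻¹' s j := by
      ext ω
      simp [Set.mem_pi, hg]
    rw [hpre, hindep.measure_inter_preimage_eq_mul Finset.univ (fun j _ => hs j)]
    refine Finset.prod_congr rfl fun j _ => ?_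
    rw [← Measure.map_apply (hmeas j) (hs j), hident j 0]
  -- measurability facts
  have hltm : ∀ a b : Fin (m + 1), MeasurableSet {x : Fin (m + 1) → β | x a < x b} := by
    intro a b
    have : {x : Fin (m + 1) → β | x a < x b} =
        (fun x : Fin (m + 1) → β => ((x a, x b) : β × β)) ⁻¹' {z : β × β | z.1 < z.2} := rfl
    rw [this]
    exact ((measurable_pi_apply a).prodMk (measurable_pi_apply b)) hlt
  have heqm : ∀ a b : Fin (m + 1), MeasurableSet {x : Fin (m + 1) → β | x a = x b} := by
    intro a b
    have : {x : Fin (m + 1) → β | x a = x b} =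
        ({x | x a < x b} ∪ {x | x b < x a})ᶜ := by
      ext x
      simp only [Set.mem_compl_iff, Set.mem_union, Set.mem_setOf_eq, not_or, not_lt]
      constructor
      · intro h; exact ⟨le_of_eq h.symm, le_of_eq h⟩
      · intro h; exact le_antisymm h.2 h.1
    rw [this]
    exact ((hltm a b).union (hltm b a)).compl
  -- the equality sets are null under π
  have heqnull : ∀ a b : Fin (m + 1), a ≠ b → π {x | x a = x b} = 0 := by
    intro a b hab
    rw [hmap, Measure.map_apply hgmeas (heqm a b)]
    have : g ⁻¹' {x | x a = x b} = {ω | f a ω = f b ω} := rfl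
    rw [this]
    exact hdistinct a b hab
  -- rank events
  set A : Fin (m + 1) → Set (Fin (m + 1) → β) := fun a => {x | rnk x a = k} with hA
  have hrnkmeas : ∀ a : Fin (m + 1), Measurable (fun x : Fin (m + 1) → β => rnk x a) := by
    intro a
    unfold rnk
    exact Finset.measurable_sum _ fun j _ =>
      Measurable.ite (hltm j a) measurable_const measurable_const
  have hAmeas : ∀ a, MeasurableSet (A a) := fun a =>
    (hrnkmeas a) (measurableSet_singleton k)
  -- rank events have pairwise null intersections
  have hAdisj : ∀ a b : Fin (m + 1), a ≠ b → A a ∩ A b ⊆ {x | x a = x b} := by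
    intro a b hab x hx
    by_contra hne
    exact rnk_ne hne (hx.1.trans hx.2.symm)
  -- all rank events have the same measure, by swap invariance
  have hAeq : ∀ a b : Fin (m + 1), π (A a) = π (A b) := by
    intro a b
    set σ : Equiv.Perm (Fin (m + 1)) := Equiv.swap a b with hσ
    have hmp : MeasurePreserving (MeasurableEquiv.piCongrLeft (fun _ => β) σ) π π :=
      measurePreserving_piCongrLeft (fun _ => ν) σ
    have hTeq : ∀ x : Fin (m + 1) → β,
        (MeasurableEquiv.piCongrLeft (fun _ => β) σ) x = x ∘ σ := by
      intro x
      funext j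
      have h1 := Equiv.piCongrLeft_apply_apply (fun _ => β) σ x (σ.symm j)
      rw [Equiv.apply_symm_apply] at h1
      have h2 : σ.symm j = σ j := by rw [hσ, Equiv.symm_swap]
      simp only [MeasurableEquiv.coe_piCongrLeft]
      rw [h1, h2]
      rfl
    have hpre : (MeasurableEquiv.piCongrLeft (fun _ => β) σ) ⁻¹' (A a) = A b := by
      ext x
      simp only [Set.mem_preimage, hA, Set.mem_setOf_eq, hTeq x, rnk_comp]
      rw [hσ, Equiv.swap_apply_left]
    calc π (A a) = π ((MeasurableEquiv.piCongrLeft (fun _ => β) σ) ⁻¹' (A a)) :=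
          (hmp.measure_preimage (hAmeas a).nullMeasurableSet).symm
      _ = π (A b) := by rw [hpre]
  -- the rank events cover everything up to a null set
  have hcover : (⋃ a, A a)ᶜ ⊆ ⋃ (a) (b) (_ : a ≠ b),
      {x : Fin (m + 1) → β | x a = x b} := by
    intro x hx
    simp only [Set.mem_compl_iff, Set.mem_iUnion, not_exists] at hx
    by_cases hinj : Function.Injective x
    · obtain ⟨a, ha⟩ := exists_rnk_eq hinj hk
      exact absurd ha (hx a)
    · simp only [Function.Injective, not_forall] at hinj
      obtain ⟨a, b, hab, hne⟩ := hinj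
      exact Set.mem_iUnion.mpr ⟨a, Set.mem_iUnion.mpr ⟨b,
        Set.mem_iUnion.mpr ⟨hne, hab⟩⟩⟩
  have hnull : π (⋃ (a) (b) (_ : a ≠ b), {x : Fin (m + 1) → β | x a = x b}) = 0 := by
    refine measure_iUnion_null fun a => measure_iUnion_null fun b => ?_
    by_cases hab : a ≠ b
    · exact measure_mono_null (Set.iUnion_subset fun _ => subset_rfl) (heqnull a b hab)
    · simp only [not_ne_iff] at hab
      simp [hab]
  have hunion : π (⋃ a, A a) = 1 := by
    have hcompl : π (⋃ a, A a)ᶜ = 0 := measure_mono_null hcover hnull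
    have := prob_compl_eq_zero_iff (MeasurableSet.iUnion hAmeas) |>.mp hcompl
    exact this
  -- sum of measures of rank events is 1
  have hsum : (∑ a : Fin (m + 1), π (A a)) = 1 := by
    rw [← hunion, measure_iUnion₀ ?_ (fun a => (hAmeas a).nullMeasurableSet)]
    · exact (tsum_fintype _).symm
    · intro a b hab
      exact measure_mono_null (hAdisj a b hab) (heqnull a b hab)
  have hconst : (∑ a : Fin (m + 1), π (A a)) = ((m : ℝ≥0∞) + 1) * π (A i) := by
    rw [Finset.sum_congr rfl fun a _ => hAeq a i, Finset.sum_const, Finset.card_univ,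
      Fintype.card_fin, nsmul_eq_mul]
    push_cast
    ring
  have hkey : ((m : ℝ≥0∞) + 1) * π (A i) = 1 := by rw [← hconst, hsum]
  have hne0 : ((m : ℝ≥0∞) + 1) ≠ 0 := by simp
  have hnetop : ((m : ℝ≥0∞) + 1) ≠ ⊤ := by
    exact ENNReal.add_ne_top.mpr ⟨ENNReal.natCast_ne_top m, ENNReal.one_ne_top⟩
  have hAval : π (A i) = ((m : ℝ≥0∞) + 1)⁻¹ := by
    calc π (A i) = (((m : ℝ≥0∞) + 1)⁻¹ * ((m : ℝ≥0∞) + 1)) * π (A i) := by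
          rw [ENNReal.inv_mul_cancel hne0 hnetop, one_mul]
      _ = ((m : ℝ≥0∞) + 1)⁻¹ * (((m : ℝ≥0∞) + 1) * π (A i)) := by ring
      _ = ((m : ℝ≥0∞) + 1)⁻¹ := by rw [hkey, mul_one]
  -- transfer back to Ω
  have hfinal : {ω | (∑ j : Fin (m + 1), if f j ω < f i ω then 1 else 0) = k}
      = g ⁻¹' (A i) := rfl
  rw [hfinal, ← Measure.map_apply hgmeas (hAmeas i), ← hmap, hAval]
end

section
/- Let Z₁, …, Z_{m+1} be a finitely exchangeable sequence of {0,1}-valued (Bernoulli) random variables, i.e., the joint distribution of (Z₁,…,Z_{m+1}) is invariant under every permutation of the indices. If S_m := Σ_{i=1}^{m} Z_i is not uniformly distributed on {0,1,…,m}, then S_{m+1} := Σ_{i=1}^{m+1} Z_i is not uniformly distributed on {0,1,…,m+1}. -/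
open MeasureTheory ProbabilityTheory
open scoped ENNReal

/-- **Lemma (exchangeable Bernoulli sums).** Let `Z 1, …, Z (m+1)` be a finitely
exchangeable sequence of `{0,1}`-valued random variables (the joint law is invariant under
every permutation of the indices).  If `S m = ∑_{i=1}^m Z i` is not uniformly distributed
on `{0, …, m}`, then `S (m+1) = ∑_{i=1}^{m+1} Z i` is not uniformly distributed on
`{0, …, m+1}`. -/
theorem exchangeable_bernoulli_sum_nonuniform
    {Ω : Type} [MeasurableSpace Ω] (μ : Measure Ω) [IsProbabilityMeasure μ]
    (m : ℕ) (Z : Fin (m + 1) → Ω → ℕ)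
    (hmeas : ∀ i, Measurable (Z i))
    (hval : ∀ i ω, Z i ω = 0 ∨ Z i ω = 1)
    (hexch : ∀ σ : Equiv.Perm (Fin (m + 1)),
      μ.map (fun ω => fun i => Z (σ i) ω) = μ.map (fun ω => fun i => Z i ω))
    (hnonunif : ¬ (∀ k : ℕ, k ≤ m →
      μ {ω | (∑ i : Fin m, Z i.castSucc ω) = k} = ((m : ℝ≥0∞) + 1)⁻¹)) :
    ¬ (∀ k : ℕ, k ≤ m + 1 →
      μ {ω | (∑ i : Fin (m + 1), Z i ω) = k} = ((m : ℝ≥0∞) + 2)⁻¹) := by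
  intro hunif
  apply hnonunif
  intro k hk
  set M : ℝ≥0∞ := (m : ℝ≥0∞) with hM
  have hM1top : M + 1 ≠ ∞ := by
    simp [hM, ENNReal.add_ne_top]
  have hM10 : M + 1 ≠ 0 := by simp
  have hM2top : M + 2 ≠ ∞ := by
    simp [hM, ENNReal.add_ne_top]
  have hM20 : M + 2 ≠ 0 := by simp
  set S : Ω → ℕ := fun ω => ∑ i : Fin (m+1), Z i ω with hSdef
  have hSmeas : Measurable S := Finset.measurable_sum _ fun i _ => hmeas i
  have hA : ∀ j : ℕ, MeasurableSet {ω | S ω = j} :=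
    fun j => hSmeas (measurableSet_singleton j)
  have hB1 : ∀ i, MeasurableSet {ω | Z i ω = 1} :=
    fun i => hmeas i (measurableSet_singleton 1)
  have hB0 : MeasurableSet {ω | Z (Fin.last m) ω = 0} :=
    hmeas _ (measurableSet_singleton 0)
  -- Step 1: exchangeability gives equal measures over coordinates
  have hswap : ∀ (j : ℕ) (i : Fin (m+1)),
      μ ({ω | S ω = j} ∩ {ω | Z i ω = 1})
        = μ ({ω | S ω = j} ∩ {ω | Z (Fin.last m) ω = 1}) := by
    intro j i
    set σ := Equiv.swap i (Fin.last m) with hσ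
    have hF : Measurable fun ω => fun i' => Z (σ i') ω :=
      measurable_pi_lambda _ fun i' => hmeas (σ i')
    have hG : Measurable fun ω => fun i' => Z i' ω :=
      measurable_pi_lambda _ fun i' => hmeas i'
    have hC : MeasurableSet {g : Fin (m+1) → ℕ | (∑ i', g i') = j ∧ g (Fin.last m) = 1} := by
      have : {g : Fin (m+1) → ℕ | (∑ i', g i') = j ∧ g (Fin.last m) = 1}
          = ((fun g : Fin (m+1) → ℕ => ∑ i', g i') ⁻¹' {j})
            ∩ ((fun g : Fin (m+1) → ℕ => g (Fin.last m)) ⁻¹' {1}) := by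
        ext g; simp [Set.mem_setOf_eq]
      rw [this]
      exact ((Finset.measurable_sum _ fun i' _ => measurable_pi_apply i')
          (measurableSet_singleton j)).inter
        ((measurable_pi_apply (Fin.last m)) (measurableSet_singleton 1))
    have h := congrArg
      (fun ν : Measure (Fin (m+1) → ℕ) =>
        ν {g : Fin (m+1) → ℕ | (∑ i', g i') = j ∧ g (Fin.last m) = 1}) (hexch σ)
    rw [Measure.map_apply hF hC, Measure.map_apply hG hC] at h
    have hpre1 : (fun ω => fun i' => Z (σ i') ω) ⁻¹'
        {g : Fin (m+1) → ℕ | (∑ i', g i') = j ∧ g (Fin.last m) = 1}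
        = {ω | S ω = j} ∩ {ω | Z i ω = 1} := by
      ext ω
      have hsum : (∑ i', Z (σ i') ω) = S ω :=
        Fintype.sum_equiv σ _ _ fun i' => rfl
      have hlast : σ (Fin.last m) = i := Equiv.swap_apply_right i (Fin.last m)
      simp [Set.mem_preimage, Set.mem_setOf_eq, hsum, hlast]
    have hpre2 : (fun ω => fun i' => Z i' ω) ⁻¹'
        {g : Fin (m+1) → ℕ | (∑ i', g i') = j ∧ g (Fin.last m) = 1}
        = {ω | S ω = j} ∩ {ω | Z (Fin.last m) ω = 1} := by
      ext ω
      simp [Set.mem_preimage, Set.mem_setOf_eq, hSdef]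
    rw [hpre1, hpre2] at h
    exact h
  -- Step 2: (m+1) * μ (A j ∩ B) = j * μ (A j)
  have hkey : ∀ j : ℕ,
      (M + 1) * μ ({ω | S ω = j} ∩ {ω | Z (Fin.last m) ω = 1}) = j * μ {ω | S ω = j} := by
    intro j
    have hint : ∀ i : Fin (m+1),
        μ ({ω | S ω = j} ∩ {ω | Z i ω = 1})
          = ∫⁻ ω in {ω | S ω = j}, (Z i ω : ℝ≥0∞) ∂μ := by
      intro i
      rw [Set.inter_comm, ← Measure.restrict_apply (hB1 i),
        ← lintegral_indicator_one (hB1 i)]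
      refine lintegral_congr fun ω => ?_
      rcases hval i ω with h | h <;>
        simp [Set.indicator_apply, Set.mem_setOf_eq, h]
    have hcoe : ∀ i : Fin (m+1), Measurable fun ω => (Z i ω : ℝ≥0∞) := by
      intro i
      exact (measurable_from_nat (f := fun n : ℕ => (n : ℝ≥0∞))).comp (hmeas i)
    calc (M + 1) * μ ({ω | S ω = j} ∩ {ω | Z (Fin.last m) ω = 1})
        = ∑ i : Fin (m+1), μ ({ω | S ω = j} ∩ {ω | Z i ω = 1}) := by
          rw [Finset.sum_congr rfl fun i _ => hswap j i, Finset.sum_const,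
            Finset.card_univ, Fintype.card_fin, nsmul_eq_mul]
          congr 1
          push_cast [hM]
          ring
      _ = ∑ i : Fin (m+1), ∫⁻ ω in {ω | S ω = j}, (Z i ω : ℝ≥0∞) ∂μ :=
          Finset.sum_congr rfl fun i _ => hint i
      _ = ∫⁻ ω in {ω | S ω = j}, ∑ i : Fin (m+1), (Z i ω : ℝ≥0∞) ∂μ :=
          (lintegral_finset_sum _ fun i _ => hcoe i).symm
      _ = ∫⁻ ω in {ω | S ω = j}, (j : ℝ≥0∞) ∂μ := by
          refine setLIntegral_congr_fun (hA j) ?_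
          intro ω hω
          have : ((S ω : ℕ) : ℝ≥0∞) = (j : ℝ≥0∞) := by rw [hω]
          rw [← this, hSdef]
          push_cast
          rfl
      _ = j * μ {ω | S ω = j} := by
          rw [setLIntegral_const]
  -- consequence: explicit value of μ (A j ∩ B)
  set c : ℝ≥0∞ := ((M + 1) * (M + 2))⁻¹ with hc
  have hMB : ∀ j : ℕ, j ≤ m + 1 →
      μ ({ω | S ω = j} ∩ {ω | Z (Fin.last m) ω = 1}) = j * c := by
    intro j hj
    have h1 := hkey j
    rw [hunif j hj] at h1
    have h2 : μ ({ω | S ω = j} ∩ {ω | Z (Fin.last m) ω = 1})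
        = (M + 1)⁻¹ * ((M + 1) * μ ({ω | S ω = j} ∩ {ω | Z (Fin.last m) ω = 1})) := by
      rw [← mul_assoc, ENNReal.inv_mul_cancel hM10 hM1top, one_mul]
    rw [h2, h1, hc, ENNReal.mul_inv (Or.inl hM10) (Or.inl hM1top)]
    ring
  -- splitting of A k along the value of Z last
  have hAk_split : μ {ω | S ω = k} =
      μ ({ω | S ω = k} ∩ {ω | Z (Fin.last m) ω = 0})
        + μ ({ω | S ω = k} ∩ {ω | Z (Fin.last m) ω = 1}) := by
    have hset : {ω | S ω = k} =
        ({ω | S ω = k} ∩ {ω | Z (Fin.last m) ω = 0})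
          ∪ ({ω | S ω = k} ∩ {ω | Z (Fin.last m) ω = 1}) := by
      ext ω
      rcases hval (Fin.last m) ω with h | h <;> simp [h]
    have hd : Disjoint ({ω | S ω = k} ∩ {ω | Z (Fin.last m) ω = 0})
        ({ω | S ω = k} ∩ {ω | Z (Fin.last m) ω = 1}) := by
      refine Set.disjoint_left.mpr fun ω h1 h2 => ?_
      simp only [Set.mem_inter_iff, Set.mem_setOf_eq] at h1 h2
      omega
    have h := measure_union (μ := μ) hd ((hA k).inter (hB1 (Fin.last m)))
    rw [← hset] at h
    exact h
  -- splitting of the target event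
  have hsplit : {ω | (∑ i : Fin m, Z i.castSucc ω) = k} =
      ({ω | S ω = k} ∩ {ω | Z (Fin.last m) ω = 0})
        ∪ ({ω | S ω = k + 1} ∩ {ω | Z (Fin.last m) ω = 1}) := by
    ext ω
    have hsum : S ω = (∑ i : Fin m, Z i.castSucc ω) + Z (Fin.last m) ω :=
      Fin.sum_univ_castSucc fun i => Z i ω
    simp only [Set.mem_setOf_eq, Set.mem_union, Set.mem_inter_iff]
    constructor
    · intro hks
      rcases hval (Fin.last m) ω with h | h
      · exact Or.inl ⟨by simp [hsum, h, hks], h⟩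
      · exact Or.inr ⟨by simp [hsum, h, hks], h⟩
    · rintro (⟨h1, h2⟩ | ⟨h1, h2⟩) <;> (rw [hsum, h2] at h1; omega)
  have hdisj : Disjoint ({ω | S ω = k} ∩ {ω | Z (Fin.last m) ω = 0})
      ({ω | S ω = k + 1} ∩ {ω | Z (Fin.last m) ω = 1}) := by
    refine Set.disjoint_left.mpr fun ω h1 h2 => ?_
    simp only [Set.mem_inter_iff, Set.mem_setOf_eq] at h1 h2
    omega
  rw [hsplit, measure_union hdisj ((hA (k+1)).inter (hB1 _))]
  have hk1 : μ ({ω | S ω = k + 1} ∩ {ω | Z (Fin.last m) ω = 1}) = (k + 1 : ℕ) * c :=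
    hMB (k + 1) (by omega)
  have hk0 : μ ({ω | S ω = k} ∩ {ω | Z (Fin.last m) ω = 1}) = (k : ℕ) * c :=
    hMB k (by omega)
  have hAkval : μ {ω | S ω = k} = (M + 2)⁻¹ := hunif k (by omega)
  have hsum0 : μ ({ω | S ω = k} ∩ {ω | Z (Fin.last m) ω = 0}) + (k : ℝ≥0∞) * c
      = (M + 2)⁻¹ := by
    rw [← hAkval, hAk_split, hk0]
  -- final arithmetic: add (k+1)*c to both sides
  have hfinal : (M + 2)⁻¹ + c = (M + 1)⁻¹ := by
    have hinv : ((M + 1) * (M + 2))⁻¹ = (M + 1)⁻¹ * (M + 2)⁻¹ :=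
      ENNReal.mul_inv (Or.inl hM10) (Or.inl hM1top)
    calc (M + 2)⁻¹ + c
        = (M + 1)⁻¹ * (M + 1) * (M + 2)⁻¹ + (M + 1)⁻¹ * (M + 2)⁻¹ := by
          rw [ENNReal.inv_mul_cancel hM10 hM1top, one_mul, hc, hinv]
      _ = (M + 1)⁻¹ * ((M + 2) * (M + 2)⁻¹) := by ring
      _ = (M + 1)⁻¹ := by
          rw [ENNReal.mul_inv_cancel hM20 hM2top, mul_one]
  rw [hk1]
  have : ((k + 1 : ℕ) : ℝ≥0∞) * c = (k : ℝ≥0∞) * c + c := by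
    push_cast
    ring
  rw [this, ← add_assoc, hsum0, hfinal]
end

section
/- Suppose p ≠ q, let h(x) := q(x) − p(x), and let ≺ be any strict total order on T such that h(x) > h(x') implies x ≺ x' (and h(x) < h(x') implies x' ≺ x). Define the cumulative functions p̃(x) := Σ_{y ≺ x} p(y) and q̃(x) := Σ_{y ≺ x} q(y). Then q̃(x) > p̃(x) for every x ∈ T that is not the ≺-least element of T. -/
open scoped ENNReal

/-- **Lemma (the CDF of `q` strictly exceeds the CDF of `p`).** Suppose `p ≠ q`, let
`h x := q x − p x`, and let `≺` be any strict total order on `T` such that `h x > h x'`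
implies `x ≺ x'` (and `h x < h x'` implies `x' ≺ x`).  Writing `p̃ x = ∑_{y ≺ x} p y` and
`q̃ x = ∑_{y ≺ x} q y`, we have `q̃ x > p̃ x` for every `x` that is not the `≺`-least
element of `T`. -/
theorem cdf_q_gt_cdf_p
    {T : Type} [Countable T] (p q : PMF T) (hpq : p ≠ q)
    (r : T → T → Prop) (hr : IsStrictTotalOrder T r)
    (horder₁ : ∀ x x' : T,
      (q x).toReal - (p x).toReal > (q x').toReal - (p x').toReal → r x x')
    (horder₂ : ∀ x x' : T,
      (q x).toReal - (p x).toReal < (q x').toReal - (p x').toReal → r x' x) :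
    ∀ x : T, (∃ y : T, r y x) →
      (∑' y : {y : T // r y x}, p y.1) < ∑' y : {y : T // r y x}, q y.1 := by
  intro x hx
  classical
  obtain ⟨a₀, ha₀⟩ := hx
  set P : T → ℝ := fun y => (p y).toReal with hPdef
  set Q : T → ℝ := fun y => (q y).toReal with hQdef
  have hpt : ∀ y, p y ≠ ⊤ := fun y => PMF.apply_ne_top p y
  have hqt : ∀ y, q y ≠ ⊤ := fun y => PMF.apply_ne_top q y
  have hPsum : Summable P := ENNReal.summable_toReal (by simp [p.tsum_coe])
  have hQsum : Summable Q := ENNReal.summable_toReal (by simp [q.tsum_coe])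
  have hPtsum : ∑' y, P y = 1 := by
    have h := ENNReal.tsum_toReal_eq hpt
    rw [p.tsum_coe] at h
    simpa [hPdef] using h.symm
  have hQtsum : ∑' y, Q y = 1 := by
    have h := ENNReal.tsum_toReal_eq hqt
    rw [q.tsum_coe] at h
    simpa [hQdef] using h.symm
  set H : T → ℝ := fun y => Q y - P y with hHdef
  have hHsum : Summable H := hQsum.sub hPsum
  have htot : ∑' y, H y = 0 := by
    rw [hHdef]
    rw [Summable.tsum_sub hQsum hPsum, hPtsum, hQtsum]
    ring
  set s : Set T := {y | r y x} with hsdef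
  have hxs : x ∉ s := hr.irrefl x
  have ha₀s : a₀ ∈ s := ha₀
  -- key monotonicity: elements of s have H-values at least those outside s
  have key : ∀ a ∈ s, ∀ b, b ∉ s → H b ≤ H a := by
    intro a ha b hb
    by_contra hlt
    push_neg at hlt
    have hba : r b a := horder₂ a b hlt
    exact hb (hr.trans b a x hba ha)
  have hHsumS : Summable (H ∘ (Subtype.val : s → T)) := hHsum.subtype s
  have hHsumSc : Summable (H ∘ (Subtype.val : ↥sᶜ → T)) := hHsum.subtype sᶜ
  have hsplit : (∑' y : s, H y) + ∑' y : ↥sᶜ, H y = 0 := by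
    rw [Summable.tsum_add_tsum_compl hHsumS hHsumSc, htot]
  -- the main real inequality
  have hpos : 0 < ∑' y : s, H y := by
    by_cases hnn : ∀ a ∈ s, 0 ≤ H a
    · -- all H nonneg on s
      by_cases hstrict : ∃ a ∈ s, 0 < H a
      · obtain ⟨a, ha, hHa⟩ := hstrict
        have hle : H a ≤ ∑' y : s, H y := by
          have := Summable.le_tsum hHsumS ⟨a, ha⟩ (fun j _ => hnn j.1 j.2)
          simpa using this
        linarith
      · -- H = 0 on s, hence H ≤ 0 everywhere, hence H ≡ 0, contradicting p ≠ q
        push_neg at hstrict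
        have hzero : ∀ a ∈ s, H a = 0 := fun a ha =>
          le_antisymm (hstrict a ha) (hnn a ha)
        have hH0 : ∀ y, H y ≤ 0 := by
          intro y
          by_cases hy : y ∈ s
          · exact (hzero y hy).le
          · calc H y ≤ H a₀ := key a₀ ha₀s y hy
              _ = 0 := hzero a₀ ha₀s
        have hHall : ∀ y, H y = 0 := by
          intro y
          have hnegsum : Summable (fun y => -H y) := hHsum.neg
          have : -H y ≤ ∑' z, -H z :=
            Summable.le_tsum hnegsum y (fun j _ => by simpa using hH0 j)
          rw [tsum_neg, htot] at this
          have : 0 ≤ H y := by linarith [this]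
          linarith [hH0 y]
        exfalso
        apply hpq
        ext y
        have h := hHall y
        have : Q y = P y := by simpa [hHdef] using sub_eq_zero.mp h
        exact ((ENNReal.toReal_eq_toReal_iff' (hpt y) (hqt y)).mp this.symm)
    · -- some a ∈ s with H a < 0; then everything outside s is < 0
      push_neg at hnn
      obtain ⟨a, ha, hHa⟩ := hnn
      have hHa' : H a < 0 := hHa
      have hScneg : ∀ b : ↥sᶜ, H b.1 ≤ H a := fun b => key a ha b.1 b.2
      have hnegsum : Summable (fun b : ↥sᶜ => -H b.1) := hHsumSc.neg
      have hxmem : x ∈ sᶜ := hxs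
      have hle : -H x ≤ ∑' b : ↥sᶜ, -H b.1 := by
        have := Summable.le_tsum hnegsum ⟨x, hxmem⟩ (fun j _ => by
          have := hScneg j
          linarith)
        simpa using this
      rw [tsum_neg] at hle
      have hHx : H x ≤ H a := key a ha x hxs
      have hScsum : (∑' y : ↥sᶜ, H y.1) < 0 := by
        have : (∑' y : ↥sᶜ, H y.1) ≤ H x := by
          have := hle
          linarith
        linarith
      have : (∑' y : s, H y) = -∑' y : ↥sᶜ, H y.1 := by linarith [hsplit]
      linarith
  -- transfer to the subtype {y // r y x}, which is definitionally ↥s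
  have hsub : ∑' y : s, P y < ∑' y : s, Q y := by
    have hPQsub : (∑' y : s, Q y) - ∑' y : s, P y = ∑' y : s, H y := by
      rw [hHdef]
      exact (Summable.tsum_sub (hQsum.subtype s) (hPsum.subtype s)).symm
    linarith
  -- finiteness of the ENNReal sums
  have hfin : ∀ (f : PMF T), (∑' y : s, f y.1) ≠ ⊤ := by
    intro f
    have hle : (∑' y : s, f y.1) ≤ ∑' y, f y := by
      rw [tsum_subtype s (fun y => f y)]
      exact ENNReal.tsum_le_tsum (fun y => Set.indicator_le_self s _ y)
    rw [f.tsum_coe] at hle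
    exact ne_top_of_le_ne_top ENNReal.one_ne_top hle
  have hPreal : (∑' y : s, p y.1).toReal = ∑' y : s, P y :=
    ENNReal.tsum_toReal_eq (fun y => hpt y.1)
  have hQreal : (∑' y : s, q y.1).toReal = ∑' y : s, Q y :=
    ENNReal.tsum_toReal_eq (fun y => hqt y.1)
  have : (∑' y : s, p y.1) < ∑' y : s, q y.1 := by
    rw [← ENNReal.toReal_lt_toReal (hfin p) (hfin q), hPreal, hQreal]
    exact hsub
  exact this
end

section
/- Let p₀, p₁ and q be probability distributions on T, and let ⊏ be a strict total order on T such that q(x) − p₀(x) > q(x') − p₀(x') implies x ⊏ x' and q(x) − p₀(x) < q(x') − p₀(x') implies x' ⊏ x. Suppose further that whenever p₁(x) − p₀(x) > 0 and p₁(y) − p₀(y) ≤ 0 one has x ⊏ y. Then P(R_{p₀,q} = 0) ≥ P(R_{p₁,q} = 0), where for a distribution p the random variable R_{p,q} ∈ {0,1} is defined by independently sampling X ~ p and Y ~ q and setting R_{p,q} = 0 if Y ⊏ X, R_{p,q} = 1 if X ⊏ Y, and R_{p,q} equal to an independent fair coin flip if X = Y. -/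
open MeasureTheory ProbabilityTheory
open scoped ENNReal

noncomputable section

/-- A fair coin: the Bernoulli(1/2) distribution on `Bool`. -/
def fairCoin : Measure Bool := (PMF.bernoulli 2⁻¹ (by norm_num)).toMeasure

instance : IsProbabilityMeasure fairCoin := PMF.toMeasure.isProbabilityMeasure _

/-- `P(R_{p,q} = 0)` for the `m = 1` stochastic rank statistic: sample `X ~ p`, `Y ~ q`
and a fair coin `c`, all mutually independent (so the joint law is the product measure);
`R_{p,q} = 0` iff `Y ⊏ X`, or `X = Y` and the tie-breaking coin comes up heads. -/
def probR0 {T : Type} [MeasurableSpace T] (rlt : T → T → Prop) (p q : PMF T) : ℝ≥0∞ :=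
  ((p.toMeasure.prod q.toMeasure).prod fairCoin)
    {z : (T × T) × Bool | rlt z.1.2 z.1.1 ∨ (z.1.1 = z.1.2 ∧ z.2 = true)}

/-- `P(R_{p,q} = 0 | X ∈ B, Y ∈ C)`: the conditional probability of the event
`R_{p,q} = 0` given `X ∈ B` and `Y ∈ C`, in the setting of `probR0`. -/
def probR0cond {T : Type} [MeasurableSpace T] (rlt : T → T → Prop) (p q : PMF T)
    (B C : Set T) : ℝ≥0∞ :=
  (((p.toMeasure.prod q.toMeasure).prod fairCoin)[|{z : (T × T) × Bool |
      z.1.1 ∈ B ∧ z.1.2 ∈ C}])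
    {z : (T × T) × Bool | rlt z.1.2 z.1.1 ∨ (z.1.1 = z.1.2 ∧ z.2 = true)}

open Finset in
/-- The tie-breaking weight: 1 if `y ⊏ x`, 1/2 if `x = y`, 0 otherwise. -/
private def rweight {T : Type} (rlt : T → T → Prop) (x y : T) : ℝ≥0∞ :=
  open scoped Classical in if rlt y x then 1 else if x = y then 2⁻¹ else 0

private lemma rweight_le_one {T : Type} (rlt : T → T → Prop) (x y : T) :
    rweight rlt x y ≤ 1 := by
  unfold rweight
  split_ifs <;> simp [ENNReal.inv_le_one, one_le_two]

private lemma fairCoin_eval {T : Type} (rlt : T → T → Prop) (hirr : ∀ a, ¬ rlt a a)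
    (x y : T) :
    fairCoin {b : Bool | rlt y x ∨ (x = y ∧ b = true)} = rweight rlt x y := by
  classical
  unfold rweight
  split_ifs with h1 h2
  · have : {b : Bool | rlt y x ∨ (x = y ∧ b = true)} = Set.univ := by
      ext b; simp [h1]
    rw [this]
    exact measure_univ
  · subst h2
    have hs : {b : Bool | rlt x x ∨ (x = x ∧ b = true)} = {true} := by
      ext b; simp [hirr x]
    rw [hs]
    unfold fairCoin
    rw [PMF.toMeasure_apply_singleton _ _ (measurableSet_singleton _)]
    simp [PMF.bernoulli]
  · have : {b : Bool | rlt y x ∨ (x = y ∧ b = true)} = ∅ := by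
      ext b; simp [h1, h2]
    rw [this]; simp

open Finset in
private lemma probR0_eq {T : Type} [Fintype T] [MeasurableSpace T]
    [MeasurableSingletonClass T] (rlt : T → T → Prop) (hirr : ∀ a, ¬ rlt a a)
    (p q : PMF T) :
    probR0 rlt p q = ∑ x, p x * ∑ y, q y * rweight rlt x y := by
  classical
  have hmeas : ∀ s : Set ((T × T) × Bool), MeasurableSet s := fun s =>
    s.toFinite.measurableSet
  unfold probR0
  rw [Measure.prod_apply (hmeas _), lintegral_countable', tsum_fintype,
    Fintype.sum_prod_type]
  refine Finset.sum_congr rfl fun x _ => ?_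
  rw [Finset.mul_sum]
  refine Finset.sum_congr rfl fun y _ => ?_
  have hsing : ({(x, y)} : Set (T × T)) = {x} ×ˢ {y} :=
    Set.singleton_prod_singleton.symm
  rw [hsing, Measure.prod_prod,
    PMF.toMeasure_apply_singleton _ _ (measurableSet_singleton _),
    PMF.toMeasure_apply_singleton _ _ (measurableSet_singleton _)]
  have hpre : (Prod.mk (x, y) ⁻¹'
      {z : (T × T) × Bool | rlt z.1.2 z.1.1 ∨ (z.1.1 = z.1.2 ∧ z.2 = true)})
      = {b : Bool | rlt y x ∨ (x = y ∧ b = true)} := rfl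
  rw [hpre, fairCoin_eval rlt hirr]
  ring

open Finset in
/-- The purely real-valued core of the mass-moving argument. -/
private lemma real_mass_move {T : Type} [Fintype T] (F P0 P1 : T → ℝ)
    (hF0 : ∀ x, 0 ≤ F x)
    (hsum : ∑ x, P0 x = ∑ x, P1 x)
    (hmono : ∀ x y, P1 x - P0 x > 0 → P1 y - P0 y ≤ 0 → F x ≤ F y) :
    ∑ x, P1 x * F x ≤ ∑ x, P0 x * F x := by
  classical
  set A : Finset T := univ.filter (fun x => P0 x < P1 x) with hAdef
  by_cases hA : A.Nonempty
  · set c := A.sup' hA F with hc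
    have hcA : ∀ x ∈ A, F x ≤ c := fun x hx => le_sup' F hx
    have hcB : ∀ y, y ∉ A → c ≤ F y := by
      intro y hy
      refine Finset.sup'_le _ _ fun x hx => ?_
      refine hmono x y ?_ ?_
      · simp only [hAdef, mem_filter, mem_univ, true_and] at hx; linarith
      · simp only [hAdef, mem_filter, mem_univ, true_and] at hy; linarith
    have key : ∀ x : T, P1 x * F x - P0 x * F x ≤ (P1 x - P0 x) * c := by
      intro x
      by_cases hx : x ∈ A
      · have h1 : 0 ≤ P1 x - P0 x := by
          simp only [hAdef, mem_filter, mem_univ, true_and] at hx; linarith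
        nlinarith [hcA x hx]
      · have h1 : P1 x - P0 x ≤ 0 := by
          simp only [hAdef, mem_filter, mem_univ, true_and] at hx; linarith
        nlinarith [hcB x hx]
    have h2 : ∑ x, (P1 x * F x - P0 x * F x) ≤ ∑ x, (P1 x - P0 x) * c :=
      Finset.sum_le_sum fun x _ => key x
    rw [Finset.sum_sub_distrib] at h2
    have h3 : ∑ x, (P1 x - P0 x) * c = 0 := by
      rw [← Finset.sum_mul, Finset.sum_sub_distrib, hsum, sub_self, zero_mul]
    linarith
  · refine Finset.sum_le_sum fun x _ => ?_
    have hx : x ∉ A := fun h => hA ⟨x, h⟩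
    simp only [hAdef, mem_filter, mem_univ, true_and, not_lt] at hx
    exact mul_le_mul_of_nonneg_right hx (hF0 x)

/-- **Lemma (mass moving).** Let `p₀, p₁, q` be probability distributions on a finite set
`T` and `⊏` a strict total order on `T` such that `q x − p₀ x > q x' − p₀ x'` implies
`x ⊏ x'` and `q x − p₀ x < q x' − p₀ x'` implies `x' ⊏ x`.  Suppose further that whenever
`p₁ x − p₀ x > 0` and `p₁ y − p₀ y ≤ 0` one has `x ⊏ y`.  Then
`P(R_{p₀,q} = 0) ≥ P(R_{p₁,q} = 0)`. -/
theorem probR0_mass_move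
    {T : Type} [Fintype T] [Nonempty T] [MeasurableSpace T] [MeasurableSingletonClass T]
    (rlt : T → T → Prop) (hr : IsStrictTotalOrder T rlt)
    (p₀ p₁ q : PMF T)
    (horder₁ : ∀ x x' : T,
      (q x).toReal - (p₀ x).toReal > (q x').toReal - (p₀ x').toReal → rlt x x')
    (horder₂ : ∀ x x' : T,
      (q x).toReal - (p₀ x).toReal < (q x').toReal - (p₀ x').toReal → rlt x' x)
    (hmove : ∀ x y : T,
      (p₁ x).toReal - (p₀ x).toReal > 0 → (p₁ y).toReal - (p₀ y).toReal ≤ 0 → rlt x y) :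
    probR0 rlt p₁ q ≤ probR0 rlt p₀ q := by
  classical
  have hirr : ∀ a, ¬ rlt a a := fun a => hr.irrefl a
  set g : T → ℝ≥0∞ := fun x => ∑ y, q y * rweight rlt x y with hg
  have hg1 : ∀ x, g x ≤ 1 := by
    intro x
    calc g x ≤ ∑ y, q y * 1 := Finset.sum_le_sum fun y _ =>
          mul_le_mul_right (rweight_le_one rlt x y) _
    _ = ∑ y, q y := by simp
    _ = 1 := by rw [← tsum_fintype (L := SummationFilter.unconditional T)]; exact q.tsum_coe
  have hgne : ∀ x, g x ≠ ⊤ := fun x => ne_top_of_le_ne_top ENNReal.one_ne_top (hg1 x)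
  have hgmono : ∀ x x', rlt x x' → g x ≤ g x' := by
    intro x x' hxx'
    refine Finset.sum_le_sum fun y _ => mul_le_mul_right ?_ _
    by_cases h1 : rlt y x
    · have h1' : rlt y x' := hr.trans _ _ _ h1 hxx'
      simp [rweight, h1, h1']
    · by_cases h2 : x = y
      · subst h2
        simp only [rweight, hirr x, if_false, if_true, hxx', if_pos rfl]
        exact ENNReal.inv_le_one.mpr one_le_two
      · simp [rweight, h1, h2]
  rw [probR0_eq rlt hirr p₁ q, probR0_eq rlt hirr p₀ q]
  have hterm : ∀ (p : PMF T) (x : T), p x * g x ≠ ⊤ :=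
    fun p x => ENNReal.mul_ne_top (p.apply_ne_top x) (hgne x)
  have hsumne : ∀ p : PMF T, (∑ x, p x * g x) ≠ ⊤ := by
    intro p
    exact (ENNReal.sum_lt_top.2 fun x _ => (hterm p x).lt_top).ne
  rw [← ENNReal.toReal_le_toReal (hsumne p₁) (hsumne p₀),
    ENNReal.toReal_sum (fun x _ => hterm p₁ x),
    ENNReal.toReal_sum (fun x _ => hterm p₀ x)]
  simp only [ENNReal.toReal_mul]
  refine real_mass_move (fun x => (g x).toReal) (fun x => (p₀ x).toReal)
    (fun x => (p₁ x).toReal) (fun x => ENNReal.toReal_nonneg) ?_ ?_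
  · have h0 : ∀ p : PMF T, ∑ x, (p x).toReal = 1 := by
      intro p
      rw [← ENNReal.toReal_sum (fun x _ => p.apply_ne_top x), ← tsum_fintype (L := SummationFilter.unconditional T),
        p.tsum_coe, ENNReal.toReal_one]
    rw [h0 p₀, h0 p₁]
  · intro x y hx hy
    exact ENNReal.toReal_mono (hgne y) (hgmono x y (hmove x y hx hy))

end
end
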